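/- arXiv:2109.13475 — 2 statements merged into one kernel-verified Lean document; each statement's English description precedes it below -/
import Mathlib

section
/- Let k = 2^t for some odd integer t ≥ 7, let m = √(2k), and let n = km/4 − k = (k/2)^{3/2} − k. Let L be a graph of order n that is a vertex-disjoint union of n/m copies of the complete graph K_m. Then there is a partial k-star decomposition of the complete graph K_n whose leave is L, the binomial coefficient C(n+k, 2) is divisible by k, and yet there is no k-star decomposition of the join L ∨ K_k (so this partial decomposition cannot be embedded in a k-star decomposition of K_{n+k}). -/
open Finset


/-- The star with centre `c` and leaf set `Lf` is a `k`-star in `G`. -/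
def IsStarIn {V : Type*} (G : SimpleGraph V) (k : ℕ) (c : V) (Lf : Finset V) : Prop :=
  Lf.card = k ∧ ∀ v ∈ Lf, G.Adj c v

/-- The edge set of the star with centre `c` and leaf set `Lf`. -/
def starEdges {V : Type*} [DecidableEq V] (c : V) (Lf : Finset V) : Finset (Sym2 V) :=
  Lf.image (fun v => s(c, v))

/-- A partial `k`-star decomposition of `G`: a set of `k`-stars of `G` whose edge sets are
pairwise disjoint. -/
def IsPartialStarDecompOn {V : Type*} [DecidableEq V] (G : SimpleGraph V) (k : ℕ)
    (D : Finset (V × Finset V)) : Prop :=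
  (∀ p ∈ D, IsStarIn G k p.1 p.2) ∧
  (∀ p ∈ D, ∀ q ∈ D, p ≠ q → Disjoint (starEdges p.1 p.2) (starEdges q.1 q.2))

/-- A `k`-star decomposition of `G`: a partial one whose stars' edge sets cover `E(G)`. -/
def IsStarDecompOn {V : Type*} [DecidableEq V] (G : SimpleGraph V) (k : ℕ)
    (D : Finset (V × Finset V)) : Prop :=
  IsPartialStarDecompOn G k D ∧ ∀ e ∈ G.edgeSet, ∃ p ∈ D, e ∈ starEdges p.1 p.2

/-- The leave of a partial star decomposition `D` of `G`: the graph on `V(G)` consisting of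
the edges of `G` lying in no star of `D`. -/
def leaveOf {V : Type*} [DecidableEq V] (G : SimpleGraph V) (D : Finset (V × Finset V)) :
    SimpleGraph V :=
  G.deleteEdges ↑(D.biUnion fun p => starEdges p.1 p.2)

/-- The join `L ∨ K_s` of `L` with a complete graph on `s` new vertices. -/
def joinK {V : Type*} (L : SimpleGraph V) (s : ℕ) : SimpleGraph (V ⊕ Fin s) where
  Adj x y := x ≠ y ∧ ∀ a b, x = Sum.inl a → y = Sum.inl b → L.Adj a b
  symm := by
    constructor
    rintro x y ⟨hxy, h⟩
    exact ⟨hxy.symm, fun a b ha hb => (h b a hb ha).symm⟩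
  loopless := by constructor; rintro x ⟨h, -⟩; exact h rfl

/-- The independence number `α(L)` of a graph `L`. -/
noncomputable def indepNumber {V : Type*} [Fintype V] (L : SimpleGraph V) : ℕ :=
  sSup {m : ℕ | ∃ t : Finset V, t.card = m ∧ ∀ x ∈ t, ∀ y ∈ t, x ≠ y → ¬ L.Adj x y}

/-- Push a star on `Fin n` forward to `Fin N` along the canonical inclusion. -/
def castStar {n N : ℕ} (h : n ≤ N) (p : Fin n × Finset (Fin n)) :
    Fin N × Finset (Fin N) :=
  (Fin.castLE h p.1, p.2.image (Fin.castLE h))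

/-- The partial `k`-star decomposition `A` of `K_n` can be embedded in a `k`-star
decomposition of `K_{n+s}`. -/
def EmbedsIn (k n s : ℕ) (A : Finset (Fin n × Finset (Fin n))) : Prop :=
  ∃ B : Finset (Fin (n + s) × Finset (Fin (n + s))),
    IsStarDecompOn (⊤ : SimpleGraph (Fin (n + s))) k B ∧
    A.image (castStar (Nat.le_add_right n s)) ⊆ B

/-- `Δ_T = |E_T| - k·∑_{x∈T} γ(x)`, where `E_T` is the set of edges of `G` incident with at
least one vertex of `T`. -/
noncomputable def starDelta {V : Type*} (G : SimpleGraph V) (k : ℕ) (γ : V → ℕ)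
    (T : Finset V) : ℤ :=
  ({e ∈ G.edgeSet | ∃ v ∈ T, v ∈ e}.ncard : ℤ) - k * ∑ x ∈ T, γ x

lemma div_eq_iff' {K x c : ℕ} (hK : 0 < K) : x / K = c ↔ c*K ≤ x ∧ x < c*K + K := by
  constructor
  · rintro rfl
    refine ⟨Nat.div_mul_le_self x K, ?_⟩
    have : x < (x / K + 1) * K := (Nat.div_lt_iff_lt_mul hK).1 (Nat.lt_succ_self _)
    calc x < (x / K + 1) * K := this
      _ = x / K * K + K := by ring
  · rintro ⟨h1, h2⟩
    have h3 : c ≤ x / K := (Nat.le_div_iff_mul_le hK).2 h1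
    have h4 : x / K < c + 1 := (Nat.div_lt_iff_lt_mul hK).2 (by linarith)
    omega

lemma mod_eq_sub_of_div {K x c : ℕ} (h : x / K = c) : x % K = x - c*K := by
  have := Nat.mod_add_div x K
  rw [h, Nat.mul_comm] at this; omega

/-- decompose `c*H + i = c'*H + i'` with `i, i' < H`. -/
lemma addMulInj {H c i c' i' : ℕ} (hi : i < H) (hi' : i' < H) :
    c*H + i = c'*H + i' ↔ c = c' ∧ i = i' := by
  constructor
  · intro e
    have hH : 0 < H := by omega
    have h1 : (c*H + i) / H = c := (div_eq_iff' hH).2 ⟨by omega, by omega⟩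
    have h2 : (c'*H + i') / H = c' := (div_eq_iff' hH).2 ⟨by omega, by omega⟩
    have hcc : c = c' := by rw [← h1, ← h2, e]
    subst hcc
    exact ⟨rfl, by omega⟩
  · rintro ⟨rfl, rfl⟩; rfl

lemma mod_shift {M a s : ℕ} (ha : a < M) (hs : s < M) :
    ((a + s) % M + M - a) % M = s := by
  have hM : 0 < M := by omega
  have h1 : ((a + s) % M + M - a) + a = (a + s) % M + M := by
    have := Nat.mod_le (a+s) M; omega
  have h2 : (((a + s) % M + M - a) + a) % M = (s + a) % M := by
    rw [h1, Nat.add_mod_right, Nat.mod_mod_of_dvd _ (dvd_refl M), Nat.add_comm a s]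
  have h3 : ((a + s) % M + M - a) % M = s % M :=
    Nat.ModEq.add_right_cancel' a h2
  rw [h3, Nat.mod_eq_of_lt hs]

lemma mod_shift2 {M a b : ℕ} (ha : a ≤ M) (hb : b < M) :
    (a + (b + M - a) % M) % M = b := by
  rw [Nat.add_mod_mod, show a + (b + M - a) = b + M from by omega, Nat.add_mod_right,
    Nat.mod_eq_of_lt hb]

/-- orientation of within-chunk edges -/
def oriP (h x y : ℕ) : Prop :=
  (x / (2*h) < y / (2*h) ∧ (y % (2*h) + 2*h - x % (2*h)) % (2*h) < h) ∨
  (y / (2*h) < x / (2*h) ∧ 1 ≤ (y % (2*h) + 2*h - x % (2*h)) % (2*h) ∧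
    (y % (2*h) + 2*h - x % (2*h)) % (2*h) ≤ h)

instance (h x y : ℕ) : Decidable (oriP h x y) := by unfold oriP; infer_instance

lemma ori_exactlyOne (h x y : ℕ) (hh : 0 < h) (hxy : x / (2*h) ≠ y / (2*h)) :
    oriP h x y ↔ ¬ oriP h y x := by
  have hM : 0 < 2*h := by omega
  have hxm : x % (2*h) < 2*h := Nat.mod_lt _ hM
  have hym : y % (2*h) < 2*h := Nat.mod_lt _ hM
  have hdM : (y % (2*h) + 2*h - x % (2*h)) % (2*h) < 2*h := Nat.mod_lt _ hM
  have hd'M : (x % (2*h) + 2*h - y % (2*h)) % (2*h) < 2*h := Nat.mod_lt _ hM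
  have hsum : ((y % (2*h) + 2*h - x % (2*h)) % (2*h) + (x % (2*h) + 2*h - y % (2*h)) % (2*h))
      % (2*h) = 0 := by
    rw [Nat.add_mod_mod, Nat.mod_add_mod,
      show (y % (2*h) + 2*h - x % (2*h)) + (x % (2*h) + 2*h - y % (2*h)) = 2*(2*h) from by omega,
      Nat.mul_mod_left]
  obtain ⟨c, hc⟩ := Nat.dvd_of_mod_eq_zero hsum
  have hcle : c ≤ 1 := by
    by_contra hcg
    have h2c : 2*h*2 ≤ 2*h*c := Nat.mul_le_mul_left _ (by omega)
    omega
  have hdd' : (y % (2*h) + 2*h - x % (2*h)) % (2*h) + (x % (2*h) + 2*h - y % (2*h)) % (2*h) = 0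
      ∨ (y % (2*h) + 2*h - x % (2*h)) % (2*h) + (x % (2*h) + 2*h - y % (2*h)) % (2*h) = 2*h := by
    interval_cases c
    · left; omega
    · right; omega
  unfold oriP
  omega

lemma addModInj' {Q c d1 d2 : ℕ} (hd1 : d1 < Q) (hd2 : d2 < Q)
    (e : (c + d1) % Q = (c + d2) % Q) : d1 = d2 := by
  have h : Nat.ModEq Q (c + d1) (c + d2) := e
  have h2 : d1 % Q = d2 % Q := Nat.ModEq.add_left_cancel' c h
  rwa [Nat.mod_eq_of_lt hd1, Nat.mod_eq_of_lt hd2] at h2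

lemma chunk_inv {Q c c' d : ℕ} (hc : c < Q) (hd0 : 0 < d) (hd : d < Q)
    (e : c' = (c + d) % Q) : c = (c' + (Q - d)) % Q := by
  have key : ((c + d) % Q + (Q - d)) % Q = c := by
    rw [Nat.mod_add_mod, show c + d + (Q - d) = c + Q from by omega, Nat.add_mod_right,
      Nat.mod_eq_of_lt hc]
  rw [e]; exact key.symm

lemma gsplit {h : ℕ} (hh : 0 < h) (x : ℕ) :
    x / (2*h) = (x / (2*h*h))*h + (x % (2*h*h)) / (2*h) ∧ (x % (2*h*h)) / (2*h) < h := by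
  have hM : 0 < 2*h := by omega
  have hK : 0 < 2*h*h := Nat.mul_pos hM hh
  constructor
  · conv_lhs => rw [← Nat.mod_add_div x (2*h*h)]
    rw [show 2*h*h * (x / (2*h*h)) = 2*h*(h*(x/(2*h*h))) from by ring]
    rw [Nat.add_mul_div_left _ _ hM]
    ring
  · apply (Nat.div_lt_iff_lt_mul hM).2
    have h2 := Nat.mod_lt x hK
    calc x % (2*h*h) < 2*h*h := h2
      _ = h * (2*h) := by ring

lemma apos_eq {h : ℕ} (x : ℕ) : x % (2*h*h) % (2*h) = x % (2*h) :=
  Nat.mod_mod_of_dvd x ⟨h, rfl⟩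

lemma card_filter_fin' (N : ℕ) (P : ℕ → Prop) [DecidablePred P] :
    ((univ : Finset (Fin N)).filter (fun v => P v.val)).card = ((range N).filter P).card := by
  apply Finset.card_nbij (i := Fin.val)
  · intro a ha
    simp only [mem_coe, mem_filter, mem_univ, true_and] at ha
    simp only [mem_coe, mem_filter, mem_range]
    exact ⟨a.isLt, ha⟩
  · exact fun a _ b _ h => Fin.ext h
  · intro b hb
    simp only [mem_coe, mem_filter, mem_range] at hb
    exact ⟨⟨b, hb.1⟩, by simp [hb.2], rfl⟩

lemma card_range_div_mod (N K B c : ℕ) (hBK : B ≤ K) (hK : 0 < K) (hcN : c*K + K ≤ N) :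
    ((range N).filter (fun v => v / K = c ∧ v % K < B)).card = B := by
  have key : ((range N).filter (fun v => v / K = c ∧ v % K < B)).card = (range B).card := by
    apply Finset.card_nbij' (i := fun v => v - c*K) (j := fun b => c*K + b)
    · intro v hv
      simp only [mem_coe, mem_filter, mem_range] at hv ⊢
      have hle := (div_eq_iff' hK).1 hv.2.1
      have := mod_eq_sub_of_div hv.2.1
      omega
    · intro b hb
      simp only [mem_coe, mem_filter, mem_range] at hb ⊢
      have hd : (c*K + b) / K = c := (div_eq_iff' hK).2 ⟨by omega, by omega⟩
      have := mod_eq_sub_of_div hd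
      exact ⟨by omega, hd, by omega⟩
    · intro v hv
      simp only [mem_coe, mem_filter, mem_range] at hv
      have hle := (div_eq_iff' hK).1 hv.2.1
      show c*K + (v - c*K) = v
      omega
    · intro b _
      show c*K + b - c*K = b
      omega
  rw [key, Finset.card_range]

lemma card_fin_div_mod (N K B c : ℕ) (hBK : B ≤ K) (hK : 0 < K) (hcN : c*K + K ≤ N) :
    ((univ : Finset (Fin N)).filter (fun v => v.val / K = c ∧ v.val % K < B)).card = B := by
  rw [card_filter_fin' N (fun v => v / K = c ∧ v % K < B), card_range_div_mod N K B c hBK hK hcN]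

lemma card_fin_div (N K c : ℕ) (hK : 0 < K) (hcN : c*K + K ≤ N) :
    ((univ : Finset (Fin N)).filter (fun v => v.val / K = c)).card = K := by
  have he : ((univ : Finset (Fin N)).filter (fun v => v.val / K = c))
      = ((univ : Finset (Fin N)).filter (fun v => v.val / K = c ∧ v.val % K < K)) := by
    apply filter_congr; intro x _
    exact ⟨fun h => ⟨h, Nat.mod_lt _ hK⟩, fun h => h.1⟩
  rw [he, card_fin_div_mod N K K c le_rfl hK hcN]

lemma card_out {h Q : ℕ} (hh : 1 ≤ h) (u : Fin (2*h*h*Q)) :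
    ((univ : Finset (Fin (2*h*h*Q))).filter (fun v =>
      v.val/(2*h*h) = u.val/(2*h*h) ∧ v.val/(2*h) ≠ u.val/(2*h) ∧ oriP h u.val v.val)).card
      = h*(h-1) := by
  have hM : 0 < 2*h := by omega
  have hK : 0 < 2*h*h := Nat.mul_pos hM hh
  have hgu := (gsplit hh u.val).1
  have hiu := (gsplit hh u.val).2
  have hau : u.val % (2*h) < 2*h := Nat.mod_lt _ hM
  have hcuQ : u.val / (2*h*h) < Q := by
    apply (Nat.div_lt_iff_lt_mul hK).2
    calc u.val < 2*h*h*Q := u.isLt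
      _ = Q * (2*h*h) := by ring
  rw [card_filter_fin' (2*h*h*Q)
    (fun v => v/(2*h*h) = u.val/(2*h*h) ∧ v/(2*h) ≠ u.val/(2*h) ∧ oriP h u.val v)]
  have key : ((range (2*h*h*Q)).filter
      (fun v => v/(2*h*h) = u.val/(2*h*h) ∧ v/(2*h) ≠ u.val/(2*h) ∧ oriP h u.val v)).card
      = (((range h).erase ((u.val % (2*h*h))/(2*h))) ×ˢ (range h)).card := by
    apply Finset.card_nbij'
      (i := fun v => ((v % (2*h*h))/(2*h),
        (v % (2*h) + 2*h - u.val % (2*h)) % (2*h)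
          - (if (u.val % (2*h*h))/(2*h) < (v % (2*h*h))/(2*h) then 0 else 1)))
      (j := fun p => u.val/(2*h*h)*(2*h*h) + p.1*(2*h)
          + ((u.val % (2*h) + p.2 + (if (u.val % (2*h*h))/(2*h) < p.1 then 0 else 1)) % (2*h)))
    · -- forward membership
      intro v hv
      simp only [mem_coe, mem_filter, mem_range] at hv
      obtain ⟨hvN, hcv, hgv, hori⟩ := hv
      have hgv' := (gsplit hh v).1
      have hiv := (gsplit hh v).2
      have hav : v % (2*h) < 2*h := Nat.mod_lt _ hM
      rw [hcv] at hgv'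
      have hivne : (v % (2*h*h))/(2*h) ≠ (u.val % (2*h*h))/(2*h) := by
        intro e; rw [e] at hgv'; omega
      have hgcmp : (u.val/(2*h) < v/(2*h)) ↔
          ((u.val % (2*h*h))/(2*h) < (v % (2*h*h))/(2*h)) := by omega
      simp only [mem_coe, Finset.mem_product, mem_erase, mem_range]
      refine ⟨⟨hivne, hiv⟩, ?_⟩
      rcases hori with ⟨hlt, hd⟩ | ⟨hlt, hd1, hd2⟩
      · rw [if_pos (hgcmp.1 hlt)]
        omega
      · rw [if_neg (fun hc => by have := hgcmp.2 hc; omega)]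
        omega
    · -- backward membership
      intro p hp
      simp only [mem_coe, Finset.mem_product, mem_erase, mem_range] at hp
      obtain ⟨⟨hjne, hjh⟩, heh⟩ := hp
      set δ := if (u.val % (2*h*h))/(2*h) < p.1 then 0 else 1 with hδ
      have hδ1 : δ ≤ 1 := by rw [hδ]; split <;> omega
      have hr : (u.val % (2*h) + p.2 + δ) % (2*h) < 2*h := Nat.mod_lt _ hM
      set r := (u.val % (2*h) + p.2 + δ) % (2*h) with hrdef
      set w := u.val/(2*h*h)*(2*h*h) + p.1*(2*h) + r with hwdef
      have hpk : p.1*(2*h) + r < 2*h*h := by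
        calc p.1*(2*h) + r < p.1*(2*h) + 2*h := by omega
          _ = (p.1+1)*(2*h) := by ring
          _ ≤ h*(2*h) := Nat.mul_le_mul_right _ (by omega)
          _ = 2*h*h := by ring
      have hwN : w < 2*h*h*Q := by
        calc w < u.val/(2*h*h)*(2*h*h) + 2*h*h := by omega
          _ = (u.val/(2*h*h)+1)*(2*h*h) := by ring
          _ ≤ Q*(2*h*h) := Nat.mul_le_mul_right _ (by omega)
          _ = 2*h*h*Q := by ring
      have hcw : w / (2*h*h) = u.val/(2*h*h) := (div_eq_iff' hK).2 ⟨by omega, by omega⟩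
      have hpw : w % (2*h*h) = p.1*(2*h) + r := by
        rw [mod_eq_sub_of_div hcw]; omega
      have hiw : (w % (2*h*h))/(2*h) = p.1 := by
        rw [hpw]; exact (div_eq_iff' hM).2 ⟨by omega, by omega⟩
      have haw : w % (2*h) = r := by
        rw [← apos_eq, hpw, show p.1*(2*h) + r = 2*h*p.1 + r from by ring, Nat.mul_add_mod,
          Nat.mod_eq_of_lt hr]
      have hgw := (gsplit hh w).1
      have hds : r = p.2 + δ → True := fun _ => trivial
      have hrval : (r + 2*h - u.val % (2*h)) % (2*h) = p.2 + δ := by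
        rw [hrdef, show u.val % (2*h) + p.2 + δ = u.val % (2*h) + (p.2 + δ) from by ring]
        exact mod_shift hau (by omega)
      simp only [mem_coe, mem_filter, mem_range]
      refine ⟨hwN, hcw, ?_, ?_⟩
      · rw [hgw, hgu, hcw, hiw]
        intro e
        have := (addMulInj hjh hiu).1 e
        exact hjne this.2
      · unfold oriP
        rw [haw, hrval, hgw, hgu, hcw, hiw]
        rw [hδ] at hrval ⊢
        by_cases hcmp : (u.val % (2*h*h))/(2*h) < p.1
        · left
          rw [if_pos hcmp] at hrval ⊢
          constructor
          · omega
          · omega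
        · right
          rw [if_neg hcmp] at hrval ⊢
          have : p.1 < (u.val % (2*h*h))/(2*h) := by omega
          exact ⟨by omega, by omega, by omega⟩
    · -- left inverse
      intro v hv
      dsimp only
      simp only [mem_coe, mem_filter, mem_range] at hv
      obtain ⟨hvN, hcv, hgv, hori⟩ := hv
      have hgv' := (gsplit hh v).1
      have hiv := (gsplit hh v).2
      have hav : v % (2*h) < 2*h := Nat.mod_lt _ hM
      rw [hcv] at hgv'
      have hgcmp : (u.val/(2*h) < v/(2*h)) ↔
          ((u.val % (2*h*h))/(2*h) < (v % (2*h*h))/(2*h)) := by omega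
      set dv := (v % (2*h) + 2*h - u.val % (2*h)) % (2*h) with hdv
      have hδdv : (if (u.val % (2*h*h))/(2*h) < (v % (2*h*h))/(2*h) then 0 else 1) ≤ dv
          ∧ dv - (if (u.val % (2*h*h))/(2*h) < (v % (2*h*h))/(2*h) then 0 else 1)
            + (if (u.val % (2*h*h))/(2*h) < (v % (2*h*h))/(2*h) then 0 else 1) = dv := by
        rcases hori with ⟨hlt, hd⟩ | ⟨hlt, hd1, hd2⟩
        · rw [if_pos (hgcmp.1 hlt)]; omega
        · have : ¬ ((u.val % (2*h*h))/(2*h) < (v % (2*h*h))/(2*h)) := by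
            intro hc; have := hgcmp.2 hc; omega
          rw [if_neg this]; omega
      -- value computation
      have hval : (u.val % (2*h) + (dv - (if (u.val % (2*h*h))/(2*h) < (v % (2*h*h))/(2*h)
          then 0 else 1)) + (if (u.val % (2*h*h))/(2*h) < (v % (2*h*h))/(2*h) then 0 else 1))
          % (2*h) = v % (2*h) := by
        rw [show u.val % (2*h) + (dv - (if (u.val % (2*h*h))/(2*h) < (v % (2*h*h))/(2*h)
          then 0 else 1)) + (if (u.val % (2*h*h))/(2*h) < (v % (2*h*h))/(2*h) then 0 else 1)
          = u.val % (2*h) + dv from by omega, hdv]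
        exact mod_shift2 (by omega) hav
      rw [hval]
      -- reconstruct v
      have hv1 : v % (2*h*h) = 2*h*((v % (2*h*h))/(2*h)) + v % (2*h) := by
        rw [← apos_eq]
        have := Nat.mod_add_div (v % (2*h*h)) (2*h)
        omega
      have hv2 : v = 2*h*h*(v/(2*h*h)) + v % (2*h*h) := by
        have := Nat.mod_add_div v (2*h*h)
        omega
      rw [hcv] at hv2
      have hc1 : u.val/(2*h*h)*(2*h*h) = 2*h*h*(u.val/(2*h*h)) := by ring
      have hc2 : (v % (2*h*h))/(2*h)*(2*h) = 2*h*((v % (2*h*h))/(2*h)) := by ring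
      omega
    · -- right inverse
      intro p hp
      simp only [mem_coe, Finset.mem_product, mem_erase, mem_range] at hp
      obtain ⟨⟨hjne, hjh⟩, heh⟩ := hp
      set δ := if (u.val % (2*h*h))/(2*h) < p.1 then 0 else 1 with hδ
      have hδ1 : δ ≤ 1 := by rw [hδ]; split <;> omega
      have hr : (u.val % (2*h) + p.2 + δ) % (2*h) < 2*h := Nat.mod_lt _ hM
      set r := (u.val % (2*h) + p.2 + δ) % (2*h) with hrdef
      set w := u.val/(2*h*h)*(2*h*h) + p.1*(2*h) + r with hwdef
      have hpk : p.1*(2*h) + r < 2*h*h := by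
        calc p.1*(2*h) + r < p.1*(2*h) + 2*h := by omega
          _ = (p.1+1)*(2*h) := by ring
          _ ≤ h*(2*h) := Nat.mul_le_mul_right _ (by omega)
          _ = 2*h*h := by ring
      have hcw : w / (2*h*h) = u.val/(2*h*h) := (div_eq_iff' hK).2 ⟨by omega, by omega⟩
      have hpw : w % (2*h*h) = p.1*(2*h) + r := by
        rw [mod_eq_sub_of_div hcw]; omega
      have hiw : (w % (2*h*h))/(2*h) = p.1 := by
        rw [hpw]; exact (div_eq_iff' hM).2 ⟨by omega, by omega⟩
      have haw : w % (2*h) = r := by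
        rw [← apos_eq, hpw, show p.1*(2*h) + r = 2*h*p.1 + r from by ring, Nat.mul_add_mod,
          Nat.mod_eq_of_lt hr]
      have hrval : (r + 2*h - u.val % (2*h)) % (2*h) = p.2 + δ := by
        rw [hrdef, show u.val % (2*h) + p.2 + δ = u.val % (2*h) + (p.2 + δ) from by ring]
        exact mod_shift hau (by omega)
      have : w % (2*h*h) / (2*h) = p.1 := hiw
      ext
      · simpa using hiw
      · simp only []
        rw [hiw, haw, hrval]
        omega
  rw [key, Finset.card_product, Finset.card_erase_of_mem (by simp [hiu]), Finset.card_range]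
  exact Nat.mul_comm _ _

def lv1 (h Q : ℕ) (u : Fin (2*h*h*Q)) : Finset (Fin (2*h*h*Q)) :=
  univ.filter (fun v =>
    (v.val/(2*h*h) = u.val/(2*h*h) ∧ v.val/(2*h) ≠ u.val/(2*h) ∧ oriP h u.val v.val) ∨
    (v.val/(2*h*h) = (u.val/(2*h*h) + 1) % Q ∧ v.val % (2*h*h) < h*(h+1)))

def lv2 (h Q : ℕ) (u : Fin (2*h*h*Q)) : Finset (Fin (2*h*h*Q)) :=
  univ.filter (fun v => v.val/(2*h*h) = (u.val/(2*h*h) + (Q-1)) % Q)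

def lv3 (h Q : ℕ) (u : Fin (2*h*h*Q)) (d : ℕ) : Finset (Fin (2*h*h*Q)) :=
  univ.filter (fun v => v.val/(2*h*h) = (u.val/(2*h*h) + d) % Q)

def starD (h Q : ℕ) : Finset (Fin (2*h*h*Q) × Finset (Fin (2*h*h*Q))) :=
  ((univ : Finset (Fin (2*h*h*Q))).image fun u => (u, lv1 h Q u)) ∪
  (((univ : Finset (Fin (2*h*h*Q))).filter fun u => h*(h+1) ≤ u.val % (2*h*h)).image
    fun u => (u, lv2 h Q u)) ∪
  (((univ : Finset (Fin (2*h*h*Q))) ×ˢ (Finset.Ico 2 ((Q-1)/2 + 1))).image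
    fun ud => (ud.1, lv3 h Q ud.1 ud.2))

lemma hshift_ne {Q c d : ℕ} (hc : c < Q) (hd0 : 0 < d) (hd : d < Q) : (c + d) % Q ≠ c := by
  intro e
  have e2 : (c + d) % Q = (c + 0) % Q := by
    rw [e, Nat.add_zero, Nat.mod_eq_of_lt hc]
  have := addModInj' hd (by omega) e2
  omega

theorem construction (h Q : ℕ) (hh : 2 ≤ h) (hQ3 : 3 ≤ Q) (hQodd : Q % 2 = 1)
    (L : SimpleGraph (Fin (2*h*h*Q)))
    (hL : ∀ x y : Fin (2*h*h*Q), L.Adj x y ↔ x ≠ y ∧ x.val/(2*h) = y.val/(2*h)) :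
    IsPartialStarDecompOn (⊤ : SimpleGraph (Fin (2*h*h*Q))) (2*h*h) (starD h Q) ∧
    leaveOf (⊤ : SimpleGraph (Fin (2*h*h*Q))) (starD h Q) = L := by
  classical
  have hh0 : 0 < h := by omega
  have hh1 : 1 ≤ h := by omega
  have hM : 0 < 2*h := by omega
  have hK : 0 < 2*h*h := Nat.mul_pos hM hh0
  have hQ0 : 0 < Q := by omega
  have hchkQ : ∀ x : Fin (2*h*h*Q), x.val/(2*h*h) < Q := by
    intro x
    apply (Nat.div_lt_iff_lt_mul hK).2
    calc x.val < 2*h*h*Q := x.isLt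
      _ = Q * (2*h*h) := by ring
  have hWK : h*(h+1) ≤ 2*h*h := by
    calc h*(h+1) ≤ h*(2*h) := Nat.mul_le_mul_left _ (by omega)
      _ = 2*h*h := by ring
  have hcKN : ∀ c, c < Q → c*(2*h*h) + 2*h*h ≤ 2*h*h*Q := by
    intro c hc
    calc c*(2*h*h) + 2*h*h = (c+1)*(2*h*h) := by ring
      _ ≤ Q*(2*h*h) := Nat.mul_le_mul_right _ (by omega)
      _ = 2*h*h*Q := by ring
  -- different chunk implies different block
  have hgblk_of_chunk : ∀ (x y : Fin (2*h*h*Q)), x.val/(2*h*h) ≠ y.val/(2*h*h) →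
      x.val/(2*h) ≠ y.val/(2*h) := by
    intro x y hne e
    have hx := gsplit hh0 x.val
    have hy := gsplit hh0 y.val
    rw [hx.1, hy.1] at e
    exact hne ((addMulInj hx.2 hy.2).1 e).1
  -- membership characterizations
  have memLv1 : ∀ (u v : Fin (2*h*h*Q)), v ∈ lv1 h Q u ↔
      ((v.val/(2*h*h) = u.val/(2*h*h) ∧ v.val/(2*h) ≠ u.val/(2*h) ∧ oriP h u.val v.val) ∨
       (v.val/(2*h*h) = (u.val/(2*h*h) + 1) % Q ∧ v.val % (2*h*h) < h*(h+1))) := by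
    intro u v; simp [lv1]
  have memLv2 : ∀ (u v : Fin (2*h*h*Q)), v ∈ lv2 h Q u ↔
      v.val/(2*h*h) = (u.val/(2*h*h) + (Q-1)) % Q := by
    intro u v; simp [lv2]
  have memLv3 : ∀ (u v : Fin (2*h*h*Q)) (d : ℕ), v ∈ lv3 h Q u d ↔
      v.val/(2*h*h) = (u.val/(2*h*h) + d) % Q := by
    intro u v d; simp [lv3]
  have memD : ∀ p : Fin (2*h*h*Q) × Finset (Fin (2*h*h*Q)), p ∈ starD h Q ↔
      ((∃ u, p = (u, lv1 h Q u)) ∨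
       (∃ u, h*(h+1) ≤ u.val % (2*h*h) ∧ p = (u, lv2 h Q u)) ∨
       (∃ u d, 2 ≤ d ∧ d ≤ (Q-1)/2 ∧ p = (u, lv3 h Q u d))) := by
    intro p
    constructor
    · intro hp
      rcases Finset.mem_union.1 hp with hp | hp
      · rcases Finset.mem_union.1 hp with hp | hp
        · obtain ⟨u, -, rfl⟩ := Finset.mem_image.1 hp
          exact Or.inl ⟨u, rfl⟩
        · obtain ⟨u, hu, rfl⟩ := Finset.mem_image.1 hp
          simp only [mem_filter, mem_univ, true_and] at hu
          exact Or.inr (Or.inl ⟨u, hu, rfl⟩)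
      · obtain ⟨ud, hud, rfl⟩ := Finset.mem_image.1 hp
        rw [Finset.mem_product, Finset.mem_Ico] at hud
        exact Or.inr (Or.inr ⟨ud.1, ud.2, hud.2.1, by omega, rfl⟩)
    · rintro (⟨u, rfl⟩ | ⟨u, hu, rfl⟩ | ⟨u, d, hd1, hd2, rfl⟩)
      · exact Finset.mem_union.2 (Or.inl (Finset.mem_union.2 (Or.inl
          (Finset.mem_image.2 ⟨u, mem_univ u, rfl⟩))))
      · exact Finset.mem_union.2 (Or.inl (Finset.mem_union.2 (Or.inr
          (Finset.mem_image.2 ⟨u, by simp [hu], rfl⟩))))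
      · exact Finset.mem_union.2 (Or.inr (Finset.mem_image.2
          ⟨(u, d), by rw [Finset.mem_product, Finset.mem_Ico]; exact ⟨mem_univ u, hd1, by omega⟩, rfl⟩))
  have memEdge : ∀ (x y : Fin (2*h*h*Q)) (p : Fin (2*h*h*Q) × Finset (Fin (2*h*h*Q))),
      s(x,y) ∈ starEdges p.1 p.2 ↔ ((p.1 = x ∧ y ∈ p.2) ∨ (p.1 = y ∧ x ∈ p.2)) := by
    intro x y p
    constructor
    · intro he
      obtain ⟨w, hw, heq⟩ := Finset.mem_image.1 he
      rcases Sym2.eq_iff.1 heq with ⟨h1, h2⟩ | ⟨h1, h2⟩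
      · exact Or.inl ⟨h1, h2 ▸ hw⟩
      · exact Or.inr ⟨h1, h2 ▸ hw⟩
    · rintro (⟨h1, hy⟩ | ⟨h1, hx⟩)
      · exact Finset.mem_image.2 ⟨y, hy, by rw [h1]⟩
      · exact Finset.mem_image.2 ⟨x, hx, by rw [h1]; exact Sym2.eq_swap⟩
  -- leaves are in different blocks from the centre
  have hcross : ∀ p ∈ starD h Q, ∀ w ∈ p.2, w.val/(2*h) ≠ p.1.val/(2*h) := by
    intro p hp w hw
    rcases (memD p).1 hp with ⟨u, rfl⟩ | ⟨u, hu, rfl⟩ | ⟨u, d, hd1, hd2, rfl⟩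
    · rcases (memLv1 u w).1 hw with ⟨-, hne, -⟩ | ⟨hc, -⟩
      · exact hne
      · exact hgblk_of_chunk w u (by
          rw [hc]; exact hshift_ne (hchkQ u) (by omega) (by omega))
    · rw [memLv2] at hw
      exact hgblk_of_chunk w u (by
        rw [hw]; exact hshift_ne (hchkQ u) (by omega) (by omega))
    · rw [memLv3] at hw
      exact hgblk_of_chunk w u (by
        rw [hw]; exact hshift_ne (hchkQ u) (by omega) (by omega))
  -- each member of starD is a (2*h*h)-star in ⊤
  have hstarIn : ∀ p ∈ starD h Q, IsStarIn (⊤ : SimpleGraph (Fin (2*h*h*Q))) (2*h*h) p.1 p.2 := by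
    intro p hp
    constructor
    · -- cardinality
      rcases (memD p).1 hp with ⟨u, rfl⟩ | ⟨u, hu, rfl⟩ | ⟨u, d, hd1, hd2, rfl⟩
      · show (lv1 h Q u).card = 2*h*h
        rw [lv1, filter_or, Finset.card_union_of_disjoint]
        · rw [card_out hh1 u,
            card_fin_div_mod (2*h*h*Q) (2*h*h) (h*(h+1)) _ hWK hK
              (hcKN _ (Nat.mod_lt _ hQ0))]
          obtain ⟨h', rfl⟩ : ∃ h', h = h' + 1 := ⟨h - 1, by omega⟩
          simp only [Nat.add_sub_cancel]
          ring
        · rw [Finset.disjoint_left]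
          intro v hv1 hv2
          simp only [mem_filter, mem_univ, true_and] at hv1 hv2
          rw [hv1.1] at hv2
          exact hshift_ne (hchkQ u) (by omega) (by omega) hv2.1.symm
      · show (lv2 h Q u).card = 2*h*h
        rw [lv2, card_fin_div (2*h*h*Q) (2*h*h) _ hK (hcKN _ (Nat.mod_lt _ hQ0))]
      · show (lv3 h Q u d).card = 2*h*h
        rw [lv3, card_fin_div (2*h*h*Q) (2*h*h) _ hK (hcKN _ (Nat.mod_lt _ hQ0))]
    · intro v hv
      have := hcross p hp v hv
      simp only [SimpleGraph.top_adj]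
      intro e; rw [e] at this; exact this rfl
  -- the main coverage lemma
  have main : ∀ x y : Fin (2*h*h*Q), x.val/(2*h) ≠ y.val/(2*h) →
      (∃ p, p ∈ starD h Q ∧ s(x,y) ∈ starEdges p.1 p.2) ∧
      (∀ q1, q1 ∈ starD h Q → s(x,y) ∈ starEdges q1.1 q1.2 →
        ∀ q2, q2 ∈ starD h Q → s(x,y) ∈ starEdges q2.1 q2.2 → q1 = q2) := by
    intro x y hg
    have hcxQ : x.val/(2*h*h) < Q := hchkQ x
    have hcyQ : y.val/(2*h*h) < Q := hchkQ y
    set cx := x.val/(2*h*h) with hcxd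
    set cy := y.val/(2*h*h) with hcyd
    set d := (cy + Q - cx) % Q with hdd
    clear_value cx cy d
    have hdQ : d < Q := by rw [hdd]; exact Nat.mod_lt _ hQ0
    have hdeq : cy = (cx + d) % Q := by
      rw [hdd, Nat.add_mod_mod, show cx + (cy + Q - cx) = cy + Q from by omega,
        Nat.add_mod_right, Nat.mod_eq_of_lt hcyQ]
    have hd0iff : d = 0 ↔ cy = cx := by
      constructor
      · intro e; rw [hdeq, e, Nat.add_zero, Nat.mod_eq_of_lt hcxQ]
      · intro e; rw [hdd, e, show cx + Q - cx = Q from by omega, Nat.mod_self]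
    have he : 0 < d → cx = (cy + (Q - d)) % Q := fun hd0 => chunk_inv hcxQ hd0 hdQ hdeq
    have classify : ∀ q, q ∈ starD h Q → s(x,y) ∈ starEdges q.1 q.2 →
        ((q = (x, lv1 h Q x) ∧ d = 0 ∧ oriP h x.val y.val) ∨
         (q = (y, lv1 h Q y) ∧ d = 0 ∧ oriP h y.val x.val) ∨
         (q = (x, lv1 h Q x) ∧ d = 1 ∧ y.val % (2*h*h) < h*(h+1)) ∨
         (q = (y, lv2 h Q y) ∧ d = 1 ∧ h*(h+1) ≤ y.val % (2*h*h)) ∨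
         (q = (y, lv1 h Q y) ∧ d = Q-1 ∧ x.val % (2*h*h) < h*(h+1)) ∨
         (q = (x, lv2 h Q x) ∧ d = Q-1 ∧ h*(h+1) ≤ x.val % (2*h*h)) ∨
         (q = (x, lv3 h Q x d) ∧ 2 ≤ d ∧ d ≤ (Q-1)/2) ∨
         (q = (y, lv3 h Q y (Q-d)) ∧ 2 ≤ Q-d ∧ Q-d ≤ (Q-1)/2)) := by
      intro q hqD hqE
      rcases (memD q).1 hqD with ⟨u, rfl⟩ | ⟨u, hu, rfl⟩ | ⟨u, d', hd'1, hd'2, rfl⟩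
      · rcases (memEdge x y _).1 hqE with ⟨hux, hmem⟩ | ⟨hux, hmem⟩
        · have hux' : u = x := hux
          rw [hux'] at hmem ⊢
          rcases (memLv1 x y).1 hmem with ⟨hc, hgne, hori⟩ | ⟨hc, hpos⟩ <;>
            rw [← hcxd, ← hcyd] at hc
          · exact Or.inl ⟨rfl, hd0iff.2 hc, hori⟩
          · have hd1 : d = 1 := addModInj' hdQ (by omega) (hdeq.symm.trans hc)
            exact Or.inr (Or.inr (Or.inl ⟨rfl, hd1, hpos⟩))
        · have hux' : u = y := hux
          rw [hux'] at hmem ⊢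
          rcases (memLv1 y x).1 hmem with ⟨hc, hgne, hori⟩ | ⟨hc, hpos⟩ <;>
            rw [← hcxd, ← hcyd] at hc
          · exact Or.inr (Or.inl ⟨rfl, hd0iff.2 hc.symm, hori⟩)
          · by_cases hd0 : d = 0
            · exfalso
              have hcc : cy = cx := hd0iff.1 hd0
              rw [hcc] at hc
              exact hshift_ne hcxQ (by omega) (by omega) hc.symm
            · have hxe := he (by omega)
              have hQd : Q - d = 1 := addModInj' (by omega) (by omega) (hxe.symm.trans hc)
              exact Or.inr (Or.inr (Or.inr (Or.inr (Or.inl ⟨rfl, by omega, hpos⟩))))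
      · rcases (memEdge x y _).1 hqE with ⟨hux, hmem⟩ | ⟨hux, hmem⟩
        · have hux' : u = x := hux
          rw [hux'] at hmem hu ⊢
          have hc := (memLv2 x y).1 hmem
          rw [← hcxd, ← hcyd] at hc
          have hdd1 : d = Q-1 := addModInj' hdQ (by omega) (hdeq.symm.trans hc)
          exact Or.inr (Or.inr (Or.inr (Or.inr (Or.inr (Or.inl ⟨rfl, hdd1, hu⟩)))))
        · have hux' : u = y := hux
          rw [hux'] at hmem hu ⊢
          have hc := (memLv2 y x).1 hmem
          rw [← hcxd, ← hcyd] at hc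
          by_cases hd0 : d = 0
          · exfalso
            have hcc : cy = cx := hd0iff.1 hd0
            rw [← hcc] at hc
            exact hshift_ne hcyQ (by omega) (by omega) hc.symm
          · have hxe := he (by omega)
            have hQd : Q - d = Q - 1 := addModInj' (by omega) (by omega) (hxe.symm.trans hc)
            have hd1 : d = 1 := by omega
            exact Or.inr (Or.inr (Or.inr (Or.inl ⟨rfl, hd1, hu⟩)))
      · rcases (memEdge x y _).1 hqE with ⟨hux, hmem⟩ | ⟨hux, hmem⟩
        · have hux' : u = x := hux
          rw [hux'] at hmem ⊢
          have hc := (memLv3 x y d').1 hmem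
          rw [← hcxd, ← hcyd] at hc
          have hdd' : d' = d := addModInj' (by omega) hdQ (hc.symm.trans hdeq)
          rw [hdd'] at hd'1 hd'2 ⊢
          exact Or.inr (Or.inr (Or.inr (Or.inr (Or.inr (Or.inr (Or.inl ⟨rfl, hd'1, hd'2⟩))))))
        · have hux' : u = y := hux
          rw [hux'] at hmem ⊢
          have hc := (memLv3 y x d').1 hmem
          rw [← hcxd, ← hcyd] at hc
          by_cases hd0 : d = 0
          · exfalso
            have hcc : cy = cx := hd0iff.1 hd0
            rw [← hcc] at hc
            exact hshift_ne hcyQ (by omega) (by omega) hc.symm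
          · have hxe := he (by omega)
            have hQd : d' = Q - d := addModInj' (by omega) (by omega) (hc.symm.trans hxe)
            rw [hQd] at hd'1 hd'2 ⊢
            exact Or.inr (Or.inr (Or.inr (Or.inr (Or.inr (Or.inr (Or.inr ⟨rfl, hd'1, hd'2⟩))))))
    have uniq : ∀ q1, q1 ∈ starD h Q → s(x,y) ∈ starEdges q1.1 q1.2 →
        ∀ q2, q2 ∈ starD h Q → s(x,y) ∈ starEdges q2.1 q2.2 → q1 = q2 := by
      intro q1 h1 h1' q2 h2 h2'
      have hxer := ori_exactlyOne h x.val y.val hh0 hg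
      rcases classify q1 h1 h1' with
        ⟨e1,f1,g1⟩|⟨e1,f1,g1⟩|⟨e1,f1,g1⟩|⟨e1,f1,g1⟩|⟨e1,f1,g1⟩|⟨e1,f1,g1⟩|⟨e1,f1,g1⟩|⟨e1,f1,g1⟩ <;>
        rcases classify q2 h2 h2' with
        ⟨e2,f2,g2⟩|⟨e2,f2,g2⟩|⟨e2,f2,g2⟩|⟨e2,f2,g2⟩|⟨e2,f2,g2⟩|⟨e2,f2,g2⟩|⟨e2,f2,g2⟩|⟨e2,f2,g2⟩ <;>
        first
          | exact e1.trans e2.symm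
          | omega
          | exact absurd g2 (hxer.1 g1)
          | exact absurd g1 (hxer.1 g2)
    constructor
    · by_cases hd0 : d = 0
      · have hcc : cy = cx := hd0iff.1 hd0
        by_cases ho : oriP h x.val y.val
        · refine ⟨(x, lv1 h Q x), (memD _).2 (Or.inl ⟨x, rfl⟩),
            (memEdge x y _).2 (Or.inl ⟨rfl, ?_⟩)⟩
          exact (memLv1 x y).2 (Or.inl ⟨by rw [← hcyd, ← hcxd]; exact hcc,
            fun e => hg e.symm, ho⟩)
        · have ho' : oriP h y.val x.val := (ori_exactlyOne h y.val x.val hh0 (Ne.symm hg)).2 ho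
          refine ⟨(y, lv1 h Q y), (memD _).2 (Or.inl ⟨y, rfl⟩),
            (memEdge x y _).2 (Or.inr ⟨rfl, ?_⟩)⟩
          exact (memLv1 y x).2 (Or.inl ⟨by rw [← hcyd, ← hcxd]; exact hcc.symm, hg, ho'⟩)
      · by_cases hd1 : d = 1
        · by_cases hw : y.val % (2*h*h) < h*(h+1)
          · refine ⟨(x, lv1 h Q x), (memD _).2 (Or.inl ⟨x, rfl⟩),
              (memEdge x y _).2 (Or.inl ⟨rfl, ?_⟩)⟩
            refine (memLv1 x y).2 (Or.inr ⟨?_, hw⟩)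
            rw [← hcyd, ← hcxd, ← hd1]
            exact hdeq
          · refine ⟨(y, lv2 h Q y), (memD _).2 (Or.inr (Or.inl ⟨y, by omega, rfl⟩)),
              (memEdge x y _).2 (Or.inr ⟨rfl, ?_⟩)⟩
            refine (memLv2 y x).2 ?_
            rw [← hcyd, ← hcxd]
            have hxe := he (by omega)
            rw [show Q - d = Q - 1 from by omega] at hxe
            exact hxe
        · by_cases hdQ1 : d = Q - 1
          · by_cases hw : x.val % (2*h*h) < h*(h+1)
            · refine ⟨(y, lv1 h Q y), (memD _).2 (Or.inl ⟨y, rfl⟩),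
                (memEdge x y _).2 (Or.inr ⟨rfl, ?_⟩)⟩
              refine (memLv1 y x).2 (Or.inr ⟨?_, hw⟩)
              rw [← hcyd, ← hcxd]
              have hxe := he (by omega)
              rw [show Q - d = 1 from by omega] at hxe
              exact hxe
            · refine ⟨(x, lv2 h Q x), (memD _).2 (Or.inr (Or.inl ⟨x, by omega, rfl⟩)),
                (memEdge x y _).2 (Or.inl ⟨rfl, ?_⟩)⟩
              refine (memLv2 x y).2 ?_
              rw [← hcyd, ← hcxd, ← hdQ1]
              exact hdeq
          · by_cases hmid : d ≤ (Q-1)/2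
            · refine ⟨(x, lv3 h Q x d), (memD _).2 (Or.inr (Or.inr ⟨x, d, by omega, hmid, rfl⟩)),
                (memEdge x y _).2 (Or.inl ⟨rfl, ?_⟩)⟩
              refine (memLv3 x y d).2 ?_
              rw [← hcyd, ← hcxd]
              exact hdeq
            · refine ⟨(y, lv3 h Q y (Q-d)),
                (memD _).2 (Or.inr (Or.inr ⟨y, Q-d, by omega, by omega, rfl⟩)),
                (memEdge x y _).2 (Or.inr ⟨rfl, ?_⟩)⟩
              refine (memLv3 y x (Q-d)).2 ?_
              rw [← hcyd, ← hcxd]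
              exact he (by omega)
    · exact uniq
  refine ⟨⟨hstarIn, ?_⟩, ?_⟩
  · intro p hp q hq hpq
    rw [Finset.disjoint_left]
    intro e hep heq
    obtain ⟨w, hw, rfl⟩ := Finset.mem_image.1 hep
    have hbw : p.1.val/(2*h) ≠ w.val/(2*h) := Ne.symm (hcross p hp w hw)
    obtain ⟨-, huq⟩ := main p.1 w hbw
    exact hpq (huq p hp (Finset.mem_image.2 ⟨w, hw, rfl⟩) q hq heq)
  · ext x y
    rw [leaveOf, SimpleGraph.deleteEdges_adj, hL]
    simp only [SimpleGraph.top_adj]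
    constructor
    · rintro ⟨hxy, hnot⟩
      refine ⟨hxy, ?_⟩
      by_contra hblk
      obtain ⟨⟨p, hpD, hpE⟩, -⟩ := main x y hblk
      exact hnot (by rw [Finset.mem_coe]; exact Finset.mem_biUnion.2 ⟨p, hpD, hpE⟩)
    · rintro ⟨hxy, hblk⟩
      refine ⟨hxy, ?_⟩
      intro hmem
      rw [Finset.mem_coe, Finset.mem_biUnion] at hmem
      obtain ⟨p, hpD, hpE⟩ := hmem
      rcases (memEdge x y p).1 hpE with ⟨h1, h2⟩ | ⟨h1, h2⟩
      · exact (hcross p hpD y h2) (by rw [h1]; exact hblk.symm)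
      · exact (hcross p hpD x h2) (by rw [h1]; exact hblk)

lemma card_filter_sum_type {α β : Type*} [Fintype α] [Fintype β] (P : α ⊕ β → Prop)
    [DecidablePred P] :
    ((univ : Finset (α ⊕ β)).filter P).card
      = ((univ : Finset α).filter (fun a => P (Sum.inl a))).card
        + ((univ : Finset β).filter (fun b => P (Sum.inr b))).card := by
  simp only [Finset.card_filter]
  rw [Fintype.sum_sum_type]

theorem noDecomp (m k n : ℕ) (hm : m * m = 2*k) (hm16 : 16 ≤ m) (hmn : m ∣ n)
    (hn4 : 4*(n+k) = k*m)
    (L : SimpleGraph (Fin n))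
    (hL : ∀ x y : Fin n, L.Adj x y ↔ x ≠ y ∧ x.val / m = y.val / m) :
    ¬ ∃ D, IsStarDecompOn (joinK L k) k D := by
  classical
  rintro ⟨D, ⟨⟨hstar, hdisj⟩, hcover⟩⟩
  have hm0 : 0 < m := by omega
  have hk0 : 0 < k := by nlinarith
  have hn0 : 0 < n := by nlinarith
  set G := joinK L k with hG
  haveI : DecidableRel G.Adj := Classical.decRel _
  -- adjacency facts
  have hAdjII : ∀ a b : Fin n, G.Adj (Sum.inl a) (Sum.inl b) ↔ L.Adj a b := by
    intro a b
    constructor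
    · rintro ⟨-, h⟩; exact h a b rfl rfl
    · intro h
      refine ⟨?_, ?_⟩
      · intro hc; rw [Sum.inl.injEq] at hc; subst hc; exact L.loopless.irrefl a h
      · rintro a' b' ha hb
        rw [Sum.inl.injEq] at ha hb; subst ha; subst hb; exact h
  have hAdjIR : ∀ (a : Fin n) (b : Fin k), G.Adj (Sum.inl a) (Sum.inr b) := by
    intro a b
    exact ⟨by simp, by rintro a' b' - hb; exact absurd hb (by simp)⟩
  have hAdjRI : ∀ (b : Fin k) (a : Fin n), G.Adj (Sum.inr b) (Sum.inl a) :=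
    fun b a => (hAdjIR a b).symm
  have hAdjRR : ∀ b b' : Fin k, G.Adj (Sum.inr b) (Sum.inr b') ↔ b ≠ b' := by
    intro b b'
    constructor
    · rintro ⟨hne, -⟩ hc; exact hne (by rw [hc])
    · intro hne
      exact ⟨by simpa using hne, by rintro a' b'' ha; exact absurd ha (by simp)⟩
  -- block bound
  have hblock : ∀ a : Fin n, (a.val / m) * m + m ≤ n := by
    intro a
    obtain ⟨B, hB⟩ := hmn
    have : a.val / m < B := by
      apply (Nat.div_lt_iff_lt_mul hm0).2
      rw [← Nat.mul_comm, ← hB]; exact a.isLt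
    calc (a.val/m)*m + m = (a.val/m + 1)*m := by ring
      _ ≤ B * m := Nat.mul_le_mul_right m this
      _ = n := by rw [hB, Nat.mul_comm]
  -- degrees
  have hdeg_inl : ∀ a : Fin n, G.degree (Sum.inl a) = (m-1) + k := by
    intro a
    rw [← SimpleGraph.card_neighborFinset_eq_degree, SimpleGraph.neighborFinset_eq_filter,
      card_filter_sum_type]
    have h1 : ((univ : Finset (Fin n)).filter (fun b => G.Adj (Sum.inl a) (Sum.inl b))).card
        = m - 1 := by
      have he : ((univ : Finset (Fin n)).filter (fun b => G.Adj (Sum.inl a) (Sum.inl b)))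
          = ((univ : Finset (Fin n)).filter (fun b : Fin n => b.val / m = a.val / m)).erase a := by
        ext b
        simp only [mem_filter, mem_univ, true_and, mem_erase, hAdjII, hL]
        constructor
        · rintro ⟨hne, hbl⟩; exact ⟨fun hc => hne (by rw [hc]), hbl.symm⟩
        · rintro ⟨hne, hbl⟩; exact ⟨fun hc => hne (by rw [hc]), hbl.symm⟩
      rw [he, Finset.card_erase_of_mem (by simp), card_fin_div n m _ hm0 (hblock a)]
    have h2 : ((univ : Finset (Fin k)).filter (fun b => G.Adj (Sum.inl a) (Sum.inr b))).card
        = k := by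
      rw [Finset.filter_true_of_mem (fun b _ => hAdjIR a b), Finset.card_univ, Fintype.card_fin]
    rw [h1, h2]
  have hdeg_inr : ∀ b : Fin k, G.degree (Sum.inr b) = n + (k-1) := by
    intro b
    rw [← SimpleGraph.card_neighborFinset_eq_degree, SimpleGraph.neighborFinset_eq_filter,
      card_filter_sum_type]
    have h1 : ((univ : Finset (Fin n)).filter (fun a => G.Adj (Sum.inr b) (Sum.inl a))).card
        = n := by
      rw [Finset.filter_true_of_mem (fun a _ => hAdjRI b a), Finset.card_univ, Fintype.card_fin]
    have h2 : ((univ : Finset (Fin k)).filter (fun b' => G.Adj (Sum.inr b) (Sum.inr b'))).card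
        = k - 1 := by
      have he : ((univ : Finset (Fin k)).filter (fun b' => G.Adj (Sum.inr b) (Sum.inr b')))
          = (univ : Finset (Fin k)).erase b := by
        ext b'
        simp only [mem_filter, mem_univ, true_and, mem_erase, hAdjRR]
        exact ⟨fun h => ⟨Ne.symm h, trivial⟩, fun h => Ne.symm h.1⟩
      rw [he, Finset.card_erase_of_mem (mem_univ b), Finset.card_univ, Fintype.card_fin]
    rw [h1, h2]
  -- total degree sum
  have hsumdeg : 2 * G.edgeFinset.card = n*((m-1)+k) + k*(n+(k-1)) := by
    rw [← SimpleGraph.sum_degrees_eq_twice_card_edges, Fintype.sum_sum_type]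
    rw [Finset.sum_congr rfl (fun a _ => hdeg_inl a), Finset.sum_congr rfl (fun b _ => hdeg_inr b)]
    simp [Finset.sum_const, Finset.card_univ, Nat.mul_comm]
  -- each star has k edges
  have hstarcard : ∀ p ∈ D, (starEdges p.1 p.2).card = k := by
    intro p hp
    obtain ⟨hc, hadj⟩ := hstar p hp
    rw [starEdges, Finset.card_image_of_injOn, hc]
    intro v hv w hw hvw
    simp only [mem_coe] at hv hw
    exact Sym2.congr_right.1 hvw
  -- the edge sets partition E(G)
  have hbiUnion : D.biUnion (fun p => starEdges p.1 p.2) = G.edgeFinset := by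
    apply Finset.Subset.antisymm
    · intro e he
      rw [Finset.mem_biUnion] at he
      obtain ⟨p, hp, hep⟩ := he
      obtain ⟨v, hv, rfl⟩ := Finset.mem_image.1 hep
      rw [SimpleGraph.mem_edgeFinset, SimpleGraph.mem_edgeSet]
      exact (hstar p hp).2 v hv
    · intro e he
      rw [Finset.mem_biUnion]
      exact hcover e (SimpleGraph.mem_edgeFinset.1 he)
  have hcardE : D.card * k = G.edgeFinset.card := by
    rw [← hbiUnion, Finset.card_biUnion (fun p hp q hq hne => hdisj p hp q hq hne)]
    rw [Finset.sum_congr rfl hstarcard, Finset.sum_const, smul_eq_mul]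
  -- gamma
  set γ : (Fin n ⊕ Fin k) → ℕ := fun x => (D.filter (fun p => p.1 = x)).card with hγ
  have hDcard : D.card = ∑ x : Fin n ⊕ Fin k, γ x := by
    exact Finset.card_eq_sum_card_fiberwise (fun p _ => Finset.mem_univ p.1)
  set NA := ∑ a : Fin n, γ (Sum.inl a) with hNA
  set NS := ∑ b : Fin k, γ (Sum.inr b) with hNS
  have hDNA : D.card = NA + NS := by rw [hDcard, Fintype.sum_sum_type]
  -- center lemma
  have hcen : ∀ x y : Fin n ⊕ Fin k, G.Adj x y → 0 < γ x ∨ 0 < γ y := by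
    intro x y hxy
    obtain ⟨p, hp, hep⟩ := hcover s(x,y) (G.mem_edgeSet.2 hxy)
    obtain ⟨w, hw, heq⟩ := Finset.mem_image.1 hep
    rw [Sym2.eq_iff] at heq
    rcases heq with ⟨h1, -⟩ | ⟨h1, -⟩
    · left; exact Finset.card_pos.2 ⟨p, Finset.mem_filter.2 ⟨hp, h1⟩⟩
    · right; exact Finset.card_pos.2 ⟨p, Finset.mem_filter.2 ⟨hp, h1⟩⟩
  -- lower bound on NS
  have hNSbound : k ≤ NS + 1 := by
    have hZ : ((univ : Finset (Fin k)).filter (fun b => γ (Sum.inr b) = 0)).card ≤ 1 := by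
      rw [Finset.card_le_one]
      intro b hb b' hb'
      simp only [mem_filter, mem_univ, true_and] at hb hb'
      by_contra hne
      rcases hcen (Sum.inr b) (Sum.inr b') ((hAdjRR b b').2 hne) with h | h
      · omega
      · omega
    have h1 : ((univ : Finset (Fin k)).filter (fun b => ¬ (γ (Sum.inr b) = 0))).card ≤ NS := by
      calc ((univ : Finset (Fin k)).filter (fun b => ¬ (γ (Sum.inr b) = 0))).card
          = ∑ b ∈ (univ : Finset (Fin k)).filter (fun b => ¬ (γ (Sum.inr b) = 0)), 1 := by
            rw [Finset.card_eq_sum_ones]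
        _ ≤ ∑ b ∈ (univ : Finset (Fin k)).filter (fun b => ¬ (γ (Sum.inr b) = 0)), γ (Sum.inr b) := by
            apply Finset.sum_le_sum
            intro i hi
            simp only [mem_filter, mem_univ, true_and] at hi
            omega
        _ ≤ NS := Finset.sum_le_sum_of_subset (Finset.filter_subset _ _)
    have h2 := Finset.card_filter_add_card_filter_not
      (s := (univ : Finset (Fin k))) (p := fun b => γ (Sum.inr b) = 0)
    rw [Finset.card_univ, Fintype.card_fin] at h2
    omega
  -- lower bound on NA
  have hNAbound : n ≤ NA + n / m := by
    have hZ : ((univ : Finset (Fin n)).filter (fun a => γ (Sum.inl a) = 0)).card ≤ n / m := by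
      have := Finset.card_le_card_of_injOn (f := fun a : Fin n => a.val / m)
        (s := (univ : Finset (Fin n)).filter (fun a => γ (Sum.inl a) = 0))
        (t := Finset.range (n / m)) ?_ ?_
      · simpa using this
      · intro a _
        rw [Finset.mem_coe, Finset.mem_range]
        obtain ⟨B, hB⟩ := hmn
        have hq : n / m = B := by rw [hB, Nat.mul_div_cancel_left _ hm0]
        rw [hq]
        exact (Nat.div_lt_iff_lt_mul hm0).2 (by rw [Nat.mul_comm, ← hB]; exact a.isLt)
      · intro a ha a' ha' hfa
        simp only [Finset.coe_filter, Set.mem_setOf_eq, mem_univ, true_and] at ha ha'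
        by_contra hne
        have hadj : G.Adj (Sum.inl a) (Sum.inl a') := (hAdjII a a').2 ((hL a a').2 ⟨hne, hfa⟩)
        rcases hcen _ _ hadj with h | h
        · omega
        · omega
    have h1 : ((univ : Finset (Fin n)).filter (fun a => ¬ (γ (Sum.inl a) = 0))).card ≤ NA := by
      calc ((univ : Finset (Fin n)).filter (fun a => ¬ (γ (Sum.inl a) = 0))).card
          = ∑ a ∈ (univ : Finset (Fin n)).filter (fun a => ¬ (γ (Sum.inl a) = 0)), 1 := by
            rw [Finset.card_eq_sum_ones]
        _ ≤ ∑ a ∈ (univ : Finset (Fin n)).filter (fun a => ¬ (γ (Sum.inl a) = 0)), γ (Sum.inl a) := by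
            apply Finset.sum_le_sum
            intro i hi
            simp only [mem_filter, mem_univ, true_and] at hi
            omega
        _ ≤ NA := Finset.sum_le_sum_of_subset (Finset.filter_subset _ _)
    have h2 := Finset.card_filter_add_card_filter_not
      (s := (univ : Finset (Fin n))) (p := fun a => γ (Sum.inl a) = 0)
    rw [Finset.card_univ, Fintype.card_fin] at h2
    omega
  -- final arithmetic
  obtain ⟨B, hB⟩ := hmn
  have hBn : n / m = B := by rw [hB, Nat.mul_div_cancel_left B hm0]
  rw [hBn] at hNAbound
  -- key equation: 2 * k * (NA + NS) = n*((m-1)+k) + k*(n+(k-1))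
  have hkey : 2 * (k * (NA + NS)) = n*((m-1)+k) + k*(n+(k-1)) := by
    rw [← hsumdeg, ← hcardE, hDNA]; ring
  -- expand the subtractions
  have hexp : n*((m-1)+k) + k*(n+(k-1)) + n + k = n*m + 2*(n*k) + k*k := by
    obtain ⟨m1, rfl⟩ : ∃ m1, m = m1 + 1 := ⟨m-1, by omega⟩
    obtain ⟨k1, rfl⟩ : ∃ k1, k = k1 + 1 := ⟨k-1, by omega⟩
    simp only [Nat.add_sub_cancel]
    ring
  -- inequalities
  have hI1 : k * n ≤ k * NA + k * B := by
    calc k * n ≤ k * (NA + B) := Nat.mul_le_mul_left k hNAbound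
      _ = k * NA + k * B := by ring
  have hI2 : k * k ≤ k * NS + k := by
    calc k * k ≤ k * (NS + 1) := Nat.mul_le_mul_left k hNSbound
      _ = k * NS + k := by ring
  -- 2*k*B relation: 2*(k*B) = m * n
  have hkB : 2 * (k * B) = m * n := by
    calc 2 * (k * B) = (2 * k) * B := by ring
      _ = (m * m) * B := by rw [hm]
      _ = m * (m * B) := by ring
      _ = m * n := by rw [← hB]
  -- combine
  have hcomb : 2*(k*n) + 2*(k*k) ≤ 2*(k*(NA+NS)) + 2*(k*B) + 2*k := by
    have := Nat.add_le_add hI1 hI2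
    calc 2*(k*n) + 2*(k*k) = 2*((k*n) + (k*k)) := by ring
      _ ≤ 2*((k * NA + k * B) + (k * NS + k)) := Nat.mul_le_mul_left 2 this
      _ = 2*(k*(NA+NS)) + 2*(k*B) + 2*k := by ring
  rw [hkey] at hcomb
  -- now: 2kn + 2kk ≤ (n*m + 2nk + kk - n - k) + mn + 2k ... use hexp to eliminate
  -- hexp: n*((m-1)+k) + k*(n+(k-1)) = n*m + 2*(n*k) + k*k - n - k (as sums)
  have hfinal : 2*(k*n) + 2*(k*k) + n + k ≤ n*m + 2*(n*k) + k*k + m*n + 2*k := by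
    have := Nat.add_le_add_right hcomb (n + k)
    calc 2*(k*n) + 2*(k*k) + n + k = 2*(k*n) + 2*(k*k) + (n + k) := by ring
      _ ≤ n*((m-1)+k) + k*(n+(k-1)) + 2*(k*B) + 2*k + (n+k) := this
      _ = (n*((m-1)+k) + k*(n+(k-1)) + n + k) + 2*(k*B) + 2*k := by ring
      _ = (n*m + 2*(n*k) + k*k) + (m*n) + 2*k := by rw [hexp, hkB]
      _ = n*m + 2*(n*k) + k*k + m*n + 2*k := by ring
  -- simplify: k*k + n ≤ 2*m*n + k  (using n*k = k*n)
  have hfin2 : k*k + n ≤ 2*(m*n) + k := by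
    have hc : 2*(k*n) = 2*(n*k) := by ring
    have hmn' : n*m = m*n := by ring
    omega
  -- absurd arithmetic: from hn4, hm
  have he3 : 8*(m*n) + 8*(k*m) = 4*(k*k) := by
    have h1 : (4*(n+k)) * (2*m) = (k*m) * (2*m) := by rw [hn4]
    have h2 : (k*m)*(2*m) = 2*k*(m*m) := by ring
    rw [hm] at h2
    have h3 : 8*(m*n) + 8*(k*m) = (4*(n+k))*(2*m) := by ring
    rw [h3, h1, h2]
    ring
  have hkm : 8*k ≤ 8*(k*m) := by
    have : k * 1 ≤ k * m := Nat.mul_le_mul_left k hm0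
    omega
  -- from hfin2: 4kk + 4n ≤ 8mn + 4k ; add 8km: 4kk + 4n + 8km ≤ 8mn + 8km + 4k = 4kk + 4k
  omega

lemma part2 (t k m n : ℕ) (ht : Odd t) (ht7 : 7 ≤ t) (hkt : k = 2 ^ t)
    (hm : m * m = 2 * k) (hn : 4 * (n + k) = k * m) :
    k ∣ Nat.choose (n + k) 2 := by
  obtain ⟨u, hu⟩ := ht
  set s := u + 1 with hs
  have hts : t + 1 = 2 * s := by omega
  have hs4 : 4 ≤ s := by omega
  have hms : m = 2 ^ s := by
    have h1 : m * m = 2 ^ s * 2 ^ s := by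
      rw [hm, hkt, ← Nat.pow_succ']
      rw [← Nat.pow_add]
      congr 1
      omega
    exact Nat.mul_self_inj.1 h1
  have hM : n + k = 2 ^ (3*s - 3) := by
    have h1 : 4 * (n + k) = 2 ^ (t + s) := by
      rw [hn, hkt, hms, ← Nat.pow_add]
    have h2 : 2 ^ (t + s) = 4 * 2 ^ (3*s - 3) := by
      have : t + s = 2 + (3*s - 3) := by omega
      rw [this, Nat.pow_add]
    omega
  rw [hM, Nat.choose_two_right]
  set W := 2 ^ (3*s - 3) - 1 with hW
  have hsplit : (2:ℕ) ^ (3*s - 3) = 2 * (2 ^ (2*s - 1) * 2 ^ (s - 3)) := by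
    rw [← Nat.pow_add, ← Nat.pow_succ']
    congr 1
    omega
  have hdd : 2 * (2 ^ (2*s - 1) * 2 ^ (s - 3)) * W / 2 = 2 ^ (2*s - 1) * (2 ^ (s - 3) * W) := by
    rw [mul_assoc, Nat.mul_div_cancel_left _ (by norm_num : (0:ℕ) < 2), mul_assoc]
  rw [hsplit, hdd, hkt]
  have ht2 : (2:ℕ) ^ t = 2 ^ (2*s - 1) := by rw [show t = 2*s-1 from by omega]
  rw [ht2]
  exact dvd_mul_right _ _

/-- for `k = 2^t` with `t ≥ 7` odd, `m = √(2k)` and `n = km/4 - k`, the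
disjoint union `L` of `n/m` copies of `K_m` is the leave of a partial `k`-star decomposition
of `K_n`, `k ∣ C(n+k,2)`, yet `L ∨ K_k` has no `k`-star decomposition. -/
theorem stmt14 (t k m n : ℕ) (ht : Odd t) (ht7 : 7 ≤ t) (hkt : k = 2 ^ t)
    (hm : m * m = 2 * k) (hn : 4 * (n + k) = k * m)
    (L : SimpleGraph (Fin n))
    (hL : ∀ x y : Fin n, L.Adj x y ↔ x ≠ y ∧ x.val / m = y.val / m) :
    (∃ D, IsPartialStarDecompOn (⊤ : SimpleGraph (Fin n)) k D ∧
        leaveOf (⊤ : SimpleGraph (Fin n)) D = L) ∧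
    k ∣ Nat.choose (n + k) 2 ∧
    ¬ ∃ D, IsStarDecompOn (joinK L k) k D := by
  obtain ⟨u, hu⟩ := ht
  set s := u + 1 with hs
  have hs4 : 4 ≤ s := by omega
  have hms : m = 2 ^ s := by
    have h1 : m * m = 2 ^ s * 2 ^ s := by
      rw [hm, hkt, ← Nat.pow_succ', ← Nat.pow_add]
      congr 1
      omega
    exact Nat.mul_self_inj.1 h1
  set H := 2^(s-1) with hH
  set Q := 2^(s-2) - 1 with hQdef
  have hp1 : (1:ℕ) ≤ 2^(s-2) := Nat.one_le_two_pow
  have hH2 : 2 ≤ H := by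
    rw [hH]
    calc (2:ℕ) = 2^1 := rfl
      _ ≤ 2^(s-1) := Nat.pow_le_pow_right (by norm_num) (by omega)
  have hQ3 : 3 ≤ Q := by
    have : (4:ℕ) ≤ 2^(s-2) := by
      calc (4:ℕ) = 2^2 := rfl
        _ ≤ 2^(s-2) := Nat.pow_le_pow_right (by norm_num) (by omega)
    omega
  have hQodd : Q % 2 = 1 := by
    have h2 : 2^(s-2) = 2 * 2^(s-3) := by
      have e : (2:ℕ) * 2^(s-3) = 2^(1+(s-3)) := by rw [pow_add, pow_one]
      rw [e]
      congr 1
      omega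
    omega
  have hmH : m = 2*H := by
    have e : 2*H = 2^(1+(s-1)) := by rw [hH, pow_add, pow_one]
    rw [hms, e]
    congr 1
    omega
  have hkH : k = 2*H*H := by
    have e : 2*H*H = 2^(1 + (s-1) + (s-1)) := by
      rw [hH, pow_add, pow_add, pow_one]
    rw [hkt, e]
    congr 1
    omega
  have hm16 : 16 ≤ m := by
    rw [hms]
    calc (16:ℕ) = 2^4 := rfl
      _ ≤ 2^s := Nat.pow_le_pow_right (by norm_num) (by omega)
  have hnH : n = 2*H*H*Q := by
    have hnk : n + k = 2^(3*s-3) := by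
      have h1 : 4 * (n + k) = 2 ^ (t + s) := by
        rw [hn, hkt, hms, ← Nat.pow_add]
      have h2 : 2 ^ (t + s) = 4 * 2 ^ (3*s - 3) := by
        have e : t + s = 2 + (3*s - 3) := by omega
        rw [e, Nat.pow_add]
      omega
    have e1 : 2*H*H*(Q+1) = 2^(3*s-3) := by
      have eq1 : Q + 1 = 2^(s-2) := by omega
      have e2 : 2*H*H*(Q+1) = 2^((1+(s-1)+(s-1)) + (s-2)) := by
        rw [pow_add, ← eq1, pow_add, pow_add, pow_one, hH]
      rw [e2]
      congr 1
      omega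
    have e2 : 2*H*H*(Q+1) = 2*H*H*Q + 2*H*H := by ring
    have e3 : k = 2*H*H := hkH
    omega
  subst hnH
  refine ⟨?_, ?_, ?_⟩
  · have hL' : ∀ x y : Fin (2*H*H*Q), L.Adj x y ↔ x ≠ y ∧ x.val/(2*H) = y.val/(2*H) := by
      intro x y
      rw [hL, hmH]
    obtain ⟨hdecomp, hleave⟩ := construction H Q hH2 hQ3 hQodd L hL'
    rw [hkH]
    exact ⟨starD H Q, hdecomp, hleave⟩
  · exact part2 t k m _ ⟨u, hu⟩ ht7 hkt hm hn
  · exact noDecomp m k _ hm hm16 ⟨H*Q, by rw [hmH]; ring⟩ hn L hL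
end

section
/- Let k = 2^t for some odd integer t ≥ 3, let m = √(2k), and let n be the smallest integer such that n ≡ 0 (mod m) and n > 2√(k(2k+1)) + √(2k). Let L be a graph of order n that is a vertex-disjoint union of n/m copies of the complete graph K_m. Then there is a partial k-star decomposition of the complete graph K_n whose leave is L, and there is no k-star decomposition of the join L ∨ K_s for any nonnegative integer s < 6k − n (so this partial decomposition cannot be embedded in a k-star decomposition of K_{n+s} for any s < 6k − n). -/
set_option linter.unusedSectionVars false
set_option maxHeartbeats 1600000

namespace Stmt16Aux
open Finset

section Orient
variable {V : Type*} [DecidableEq V] [Fintype V] [LinearOrder V]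

open Finset

variable {V : Type*} [DecidableEq V] [Fintype V] [LinearOrder V]

/-- internal ordered pairs of `P` within `T` -/
def Pin (P : Finset (V × V)) (T : Finset V) : Finset (V × V) :=
  P.filter (fun p => p.1 ∈ T ∧ p.2 ∈ T)

lemma Pin_subset (P : Finset (V × V)) (T : Finset V) : Pin P T ⊆ P :=
  filter_subset _ _

lemma Pin_univ (P : Finset (V × V)) : Pin P univ = P := by
  simp [Pin]

lemma mem_Pin {P : Finset (V × V)} {T : Finset V} {p : V × V} :
    p ∈ Pin P T ↔ p ∈ P ∧ p.1 ∈ T ∧ p.2 ∈ T := by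
  simp [Pin]

lemma even_card_sympairs {Q : Finset (V × V)} (hirr : ∀ p ∈ Q, p.1 ≠ p.2)
    (hsymm : ∀ p ∈ Q, (p.2, p.1) ∈ Q) : Even Q.card := by
  classical
  have hsplit : Q.card = (Q.filter (fun p => p.1 < p.2)).card
      + (Q.filter (fun p => ¬ p.1 < p.2)).card :=
    (Finset.card_filter_add_card_filter_not _).symm
  have hbij : (Q.filter (fun p => p.1 < p.2)).card
      = (Q.filter (fun p => ¬ p.1 < p.2)).card := by
    apply Finset.card_bij (fun p _ => (p.2, p.1))
    · rintro ⟨a, b⟩ hp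
      simp only [mem_filter] at hp ⊢
      exact ⟨hsymm _ hp.1, not_lt.2 hp.2.le⟩
    · rintro ⟨a, b⟩ ha ⟨c, d⟩ hc h
      simp only [Prod.mk.injEq] at h
      simp [h.1, h.2]
    · rintro ⟨a, b⟩ hp
      simp only [mem_filter, not_lt] at hp
      refine ⟨(b, a), ?_, rfl⟩
      simp only [mem_filter]
      have hne : b ≠ a := fun h => (hirr _ hp.1) (by simp [h])
      exact ⟨hsymm _ hp.1, lt_of_le_of_ne hp.2 (by simpa using hne)⟩
  rw [hsplit, hbij]
  exact ⟨_, rfl⟩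

lemma Pin_submodular (P : Finset (V × V)) (T U : Finset V) :
    (Pin P T).card + (Pin P U).card ≤ (Pin P (T ∪ U)).card + (Pin P (T ∩ U)).card := by
  classical
  have h1 : Pin P T ∪ Pin P U ⊆ Pin P (T ∪ U) := by
    intro p hp
    rcases mem_union.1 hp with h | h <;> rw [mem_Pin] at h ⊢ <;>
      exact ⟨h.1, mem_union.2 (by tauto), mem_union.2 (by tauto)⟩
  have h2 : Pin P T ∩ Pin P U = Pin P (T ∩ U) := by
    ext p
    simp only [mem_inter, mem_Pin, Finset.mem_inter]
    tauto
  calc (Pin P T).card + (Pin P U).card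
      = (Pin P T ∪ Pin P U).card + (Pin P T ∩ Pin P U).card :=
        (card_union_add_card_inter _ _).symm
    _ ≤ (Pin P (T ∪ U)).card + (Pin P (T ∩ U)).card := by
        rw [h2]; have := card_le_card h1; omega

theorem orient : ∀ (N : ℕ) (P : Finset (V × V)) (τ : V → ℕ),
    P.card = N →
    (∀ p ∈ P, p.1 ≠ p.2) →
    (∀ p ∈ P, (p.2, p.1) ∈ P) →
    (∀ T : Finset V, (Pin P T).card ≤ 2 * ∑ v ∈ T, τ v) →
    (P.card = 2 * ∑ v : V, τ v) →
    ∃ A : V → Finset V, (∀ v, ∀ w ∈ A v, (v, w) ∈ P) ∧ (∀ v, (A v).card = τ v) ∧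
      (∀ p ∈ P, (p.2 ∈ A p.1 ↔ p.1 ∉ A p.2)) := by
  intro N
  induction N using Nat.strong_induction_on with
  | _ N ih =>
  intro P τ hcard hirr hsymm hall htot
  rcases eq_empty_or_nonempty P with hP | hP
  · have hτ : ∀ v, τ v = 0 := by
      have h0 : P.card = 0 := by rw [hP]; simp
      have hs : ∑ v : V, τ v = 0 := by omega
      intro v
      exact Finset.sum_eq_zero_iff.1 hs v (mem_univ v)
    exact ⟨fun _ => ∅, by simp, fun v => by simp [hτ v], by simp [hP]⟩
  · classical
    set F : Finset (Finset V) :=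
      univ.powerset.filter (fun T => (Pin P T).card = 2 * ∑ v ∈ T, τ v ∧ 0 < (Pin P T).card)
      with hF
    have hunivF : (univ : Finset V) ∈ F := by
      rw [hF, mem_filter]
      exact ⟨mem_powerset_self _, by rw [Pin_univ]; exact htot,
        by rw [Pin_univ]; exact card_pos.2 hP⟩
    obtain ⟨T₁, hT₁F, hT₁min⟩ := Finset.exists_min_image F Finset.card ⟨_, hunivF⟩
    have hT₁F' := hT₁F
    rw [hF, mem_filter] at hT₁F'
    obtain ⟨-, htight₁, hne₁⟩ := hT₁F'
    have hexists : ∃ p ∈ Pin P T₁, 1 ≤ τ p.1 := by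
      by_contra hno
      push_neg at hno
      have hzero : ∀ p ∈ Pin P T₁, τ p.1 = 0 := fun p hp => by have := hno p hp; omega
      set T' := T₁.filter (fun v => τ v = 0) with hT'
      have hsub : Pin P T₁ ⊆ Pin P T' := by
        intro p hp
        have hp' := mem_Pin.1 hp
        have h2 : (p.2, p.1) ∈ Pin P T₁ :=
          mem_Pin.2 ⟨hsymm _ hp'.1, hp'.2.2, hp'.2.1⟩
        rw [mem_Pin]
        refine ⟨hp'.1, ?_, ?_⟩
        · rw [hT', mem_filter]; exact ⟨hp'.2.1, hzero p hp⟩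
        · rw [hT', mem_filter]; exact ⟨hp'.2.2, hzero _ h2⟩
      have hposT' : 0 < (Pin P T').card := lt_of_lt_of_le hne₁ (card_le_card hsub)
      have hsum0 : ∑ v ∈ T', τ v = 0 := by
        apply Finset.sum_eq_zero
        intro v hv
        rw [hT', mem_filter] at hv
        exact hv.2
      have := hall T'
      omega
    obtain ⟨⟨x, y⟩, hpin₀, hτx⟩ := hexists
    have hpin₀' := mem_Pin.1 hpin₀
    obtain ⟨hxyP, hxT₁, hyT₁⟩ := hpin₀'
    simp only at hxT₁ hyT₁ hτx
    have hxy : x ≠ y := hirr _ hxyP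
    have hyxP : (y, x) ∈ P := hsymm _ hxyP
    have hne_pair : ((y, x) : V × V) ≠ (x, y) := by
      simp only [Ne, Prod.ext_iff, not_and]
      intro h; exact absurd h.symm hxy
    have hne_pair' : ((x, y) : V × V) ≠ (y, x) := by
      simp only [Ne, Prod.ext_iff, not_and]
      intro h; exact absurd h hxy
    set P' : Finset (V × V) := (P.erase (x, y)).erase (y, x) with hP'
    set τ' : V → ℕ := Function.update τ x (τ x - 1) with hτ'
    have hyx_mem : (y, x) ∈ P.erase (x, y) := mem_erase.2 ⟨hne_pair, hyxP⟩
    have hcardP' : P'.card = P.card - 2 := by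
      rw [hP', card_erase_of_mem hyx_mem, card_erase_of_mem hxyP]
      omega
    have hmemP' : ∀ p, p ∈ P' ↔ p ∈ P ∧ p ≠ (x, y) ∧ p ≠ (y, x) := by
      intro p
      rw [hP', mem_erase, mem_erase]
      tauto
    have hcard2 : 2 ≤ P.card := by
      have hsub : ({(x, y), (y, x)} : Finset (V × V)) ⊆ P := by
        intro p hp
        rcases mem_insert.1 hp with h | h
        · exact h ▸ hxyP
        · rw [mem_singleton.1 h]; exact hyxP
      calc 2 = ({(x, y), (y, x)} : Finset (V × V)).card := by
            rw [card_insert_of_notMem (by simpa using hne_pair'), card_singleton]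
        _ ≤ P.card := card_le_card hsub
    have hirr' : ∀ p ∈ P', p.1 ≠ p.2 := fun p hp => hirr p (((hmemP' p).1 hp).1)
    have hsymm' : ∀ p ∈ P', (p.2, p.1) ∈ P' := by
      rintro ⟨a, b⟩ hp
      rw [hmemP'] at hp ⊢
      refine ⟨hsymm _ hp.1, ?_, ?_⟩ <;>
        · simp only [Ne, Prod.ext_iff] at hp ⊢
          tauto
    have hsumτ' : ∀ T : Finset V, x ∈ T → (∑ v ∈ T, τ' v) + 1 = ∑ v ∈ T, τ v := by
      intro T hxT
      rw [hτ', Finset.sum_update_of_mem hxT, Finset.sdiff_singleton_eq_erase]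
      have h1 := Finset.add_sum_erase T τ hxT
      omega
    have hsumτ'_not : ∀ T : Finset V, x ∉ T → ∑ v ∈ T, τ' v = ∑ v ∈ T, τ v := by
      intro T hxT
      apply Finset.sum_congr rfl
      intro v hv
      have hvx : v ≠ x := by rintro rfl; exact hxT hv
      rw [hτ', Function.update_of_ne hvx]
    have hPin' : ∀ T : Finset V, Pin P' T = ((Pin P T).erase (x, y)).erase (y, x) := by
      intro T
      rw [hP', Pin, Pin, Finset.filter_erase, Finset.filter_erase]
    have hPin'_of_namem : ∀ T : Finset V, ((x, y) ∉ Pin P T) → ((y, x) ∉ Pin P T) →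
        Pin P' T = Pin P T := by
      intro T h1 h2
      rw [hPin' T, Finset.erase_eq_of_notMem, Finset.erase_eq_of_notMem h1]
      rw [mem_erase]
      exact fun h => h2 h.2
    have hall' : ∀ T : Finset V, (Pin P' T).card ≤ 2 * ∑ v ∈ T, τ' v := by
      intro T
      by_cases hxT : x ∈ T
      · by_cases hyT : y ∈ T
        · have hxyPin : (x, y) ∈ Pin P T := mem_Pin.2 ⟨hxyP, hxT, hyT⟩
          have hyxPin : (y, x) ∈ (Pin P T).erase (x, y) :=
            mem_erase.2 ⟨hne_pair, mem_Pin.2 ⟨hyxP, hyT, hxT⟩⟩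
          have hcardPin : (Pin P' T).card = (Pin P T).card - 2 := by
            rw [hPin' T, card_erase_of_mem hyxPin, card_erase_of_mem hxyPin]
            omega
          have h2 : 2 ≤ (Pin P T).card := by
            have hsub : ({(x, y), (y, x)} : Finset (V × V)) ⊆ Pin P T := by
              intro p hp
              rcases mem_insert.1 hp with h | h
              · exact h ▸ hxyPin
              · rw [mem_singleton.1 h]; exact (mem_erase.1 hyxPin).2
            calc 2 = ({(x, y), (y, x)} : Finset (V × V)).card := by
                  rw [card_insert_of_notMem (by simpa using hne_pair'), card_singleton]
              _ ≤ _ := card_le_card hsub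
          have hh := hall T
          have hs := hsumτ' T hxT
          omega
        · -- x ∈ T, y ∉ T
          have heq : Pin P' T = Pin P T := by
            apply hPin'_of_namem <;> rw [mem_Pin] <;> rintro ⟨-, h1, h2⟩
            · exact hyT h2
            · exact hyT h1
          have heven : Even (Pin P T).card :=
            even_card_sympairs (fun p hp => hirr p (Pin_subset P T hp))
              (fun p hp => by
                have hp' := mem_Pin.1 hp
                exact mem_Pin.2 ⟨hsymm _ hp'.1, hp'.2.2, hp'.2.1⟩)
          have hnotight : (Pin P T).card ≠ 2 * ∑ v ∈ T, τ v := by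
            intro htight
            rcases Nat.eq_zero_or_pos (Pin P T).card with h0 | hposPin
            · -- then the sum is 0, contradicting τ x ≥ 1
              have : ∑ v ∈ T, τ v = 0 := by omega
              have := Finset.sum_eq_zero_iff.1 this x hxT
              omega
            · -- T is a tight set with an internal pair; intersect with T₁
              have hTF : T ∈ F := by
                rw [hF, mem_filter]
                exact ⟨mem_powerset.2 (subset_univ T), htight, hposPin⟩
              -- T ∩ T₁ is tight
              have hsubmod := Pin_submodular P T T₁
              have hallU := hall (T ∪ T₁)
              have hallI := hall (T ∩ T₁)
              have hsums : (∑ v ∈ T ∪ T₁, τ v) + ∑ v ∈ T ∩ T₁, τ v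
                  = (∑ v ∈ T, τ v) + ∑ v ∈ T₁, τ v := Finset.sum_union_inter
              have htightI : (Pin P (T ∩ T₁)).card = 2 * ∑ v ∈ T ∩ T₁, τ v := by omega
              -- minimality of T₁
              have hssub : T ∩ T₁ ⊂ T₁ :=
                Finset.ssubset_iff_of_subset (inter_subset_right)
                  |>.2 ⟨y, hyT₁, fun h => hyT (mem_inter.1 h).1⟩
              have hcardlt : (T ∩ T₁).card < T₁.card := card_lt_card hssub
              have hnotF : T ∩ T₁ ∉ F := fun h => absurd (hT₁min _ h) (by omega)
              have hzeroPin : ¬ 0 < (Pin P (T ∩ T₁)).card := by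
                intro hpos
                apply hnotF
                rw [hF, mem_filter]
                exact ⟨mem_powerset.2 (subset_univ _), htightI, hpos⟩
              have hzero : (Pin P (T ∩ T₁)).card = 0 := by omega
              have hsum0 : ∑ v ∈ T ∩ T₁, τ v = 0 := by omega
              have hxI : x ∈ T ∩ T₁ := mem_inter.2 ⟨hxT, hxT₁⟩
              have := Finset.sum_eq_zero_iff.1 hsum0 x hxI
              omega
          have hh := hall T
          have hs := hsumτ' T hxT
          obtain ⟨r, hr⟩ := heven
          rw [heq]
          omega
      · rw [hsumτ'_not T hxT]
        have heq : Pin P' T = Pin P T := by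
          apply hPin'_of_namem <;> rw [mem_Pin] <;> rintro ⟨-, h1, h2⟩
          · exact hxT h1
          · exact hxT h2
        rw [heq]
        exact hall T
    have htot' : P'.card = 2 * ∑ v : V, τ' v := by
      have hs := hsumτ' univ (mem_univ x)
      omega
    obtain ⟨A', hA'P, hA'card, hA'xor⟩ :=
      ih (P.card - 2) (by omega) P' τ' hcardP' hirr' hsymm' hall' htot'
    have hynA' : y ∉ A' x := by
      intro h
      have := hA'P x y h
      rw [hmemP'] at this
      exact this.2.1 rfl
    set A : V → Finset V := Function.update A' x (insert y (A' x)) with hA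
    have hAx : A x = insert y (A' x) := by rw [hA, Function.update_self]
    have hAother : ∀ v, v ≠ x → A v = A' v := fun v hv => by
      rw [hA, Function.update_of_ne hv]
    refine ⟨A, ?_, ?_, ?_⟩
    · intro v w hw
      by_cases hv : v = x
      · subst hv
        rw [hAx, mem_insert] at hw
        rcases hw with h | h
        · exact h ▸ hxyP
        · exact ((hmemP' _).1 (hA'P _ _ h)).1
      · rw [hAother v hv] at hw
        exact ((hmemP' _).1 (hA'P _ _ hw)).1
    · intro v
      by_cases hv : v = x
      · subst hv
        rw [hAx, card_insert_of_notMem hynA', hA'card]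
        rw [hτ', Function.update_self]
        omega
      · rw [hAother v hv, hA'card, hτ', Function.update_of_ne hv]
    · rintro ⟨a, b⟩ habP
      by_cases h1 : ((a, b) : V × V) = (x, y)
      · have ha : a = x := congrArg Prod.fst h1
        have hb : b = y := congrArg Prod.snd h1
        simp only [ha, hb]
        constructor
        · intro _ hxAy
          rw [hAother y (Ne.symm hxy)] at hxAy
          have := hA'P y x hxAy
          rw [hmemP'] at this
          exact this.2.2 rfl
        · intro _
          rw [hAx]
          exact mem_insert_self _ _
      · by_cases h2 : ((a, b) : V × V) = (y, x)
        · have ha : a = y := congrArg Prod.fst h2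
          have hb : b = x := congrArg Prod.snd h2
          simp only [ha, hb]
          have hbx : x ∉ A y := by
            rw [hAother y (Ne.symm hxy)]
            intro hxAy
            have := hA'P y x hxAy
            rw [hmemP'] at this
            exact this.2.2 rfl
          have hyAx : y ∈ A x := by rw [hAx]; exact mem_insert_self _ _
          constructor
          · intro h; exact absurd h hbx
          · intro h; exact absurd hyAx h
        · have habP' : (a, b) ∈ P' := (hmemP' _).2 ⟨habP, h1, h2⟩
          have hIH := hA'xor _ habP'
          simp only at hIH ⊢
          have e1 : b ∈ A a ↔ b ∈ A' a := by
            by_cases hv : a = x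
            · subst hv
              rw [hAx, mem_insert]
              have hby : b ≠ y := fun h => h1 (by rw [h])
              simp [hby]
            · rw [hAother a hv]
          have e2 : a ∈ A b ↔ a ∈ A' b := by
            by_cases hv : b = x
            · subst hv
              rw [hAx, mem_insert]
              have hay : a ≠ y := fun h => h2 (by rw [h])
              simp [hay]
            · rw [hAother b hv]
          rw [e1, e2]
          exact hIH

end Orient

lemma arith1 (m ρ μ q X R : ℤ) (hq : q = m + 1 + ρ) (hρ1 : 1 ≤ ρ) (hμ : ρ + μ = m)
    (hμ0 : 0 ≤ μ)
    (hX0 : 0 ≤ X) (hXn : X ≤ q * m) (hR0 : 0 ≤ R) (hRlow : X ≤ R + q * μ) :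
    (q - 1) * X ^ 2 ≤ q * m ^ 2 * (X + R) := by
  have hm1 : 1 ≤ m := by omega
  have hq0 : 0 < q := by omega
  rcases le_or_gt ((q - 1) * X) (q * m ^ 2) with h | h
  · have h1 : (q - 1) * X ^ 2 ≤ q * m ^ 2 * X := by
      calc (q - 1) * X ^ 2 = ((q - 1) * X) * X := by ring
        _ ≤ (q * m ^ 2) * X := mul_le_mul_of_nonneg_right h hX0
    have h2 : q * m ^ 2 * X ≤ q * m ^ 2 * (X + R) :=
      mul_le_mul_of_nonneg_left (by omega) (by positivity)
    omega
  · set E : ℤ := q * m - X with hE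
    have hE0 : 0 ≤ E := by omega
    have hq1 : q - 1 = m + ρ := by omega
    have h' : (m + ρ) * X > q * m ^ 2 := by rw [← hq1]; exact h
    have hEE : (m + ρ) * E = q * m ^ 2 + q * m * ρ - (m + ρ) * X := by
      rw [hE]
      have : m + ρ ≠ 0 := by omega
      nlinarith [hq1]
    have hkey : (m + ρ) * E < q * m * ρ := by linarith [hEE, h']
    have hiden : q * m ^ 2 * (2 * X - q * μ) - (q - 1) * X ^ 2
        = E * (2 * q * m * ρ - (m + ρ) * E) := by
      have hXE : X = q * m - E := by omega
      have hμm : μ = m - ρ := by omega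
      subst hq
      rw [hXE, hμm]
      ring
    have hprod : 0 ≤ E * (2 * q * m * ρ - (m + ρ) * E) := by
      apply mul_nonneg hE0
      have hpos : 0 < q * m * ρ := by positivity
      linarith [hkey]
    have hstep : (q - 1) * X ^ 2 ≤ q * m ^ 2 * (2 * X - q * μ) := by linarith [hiden, hprod]
    have hstep2 : q * m ^ 2 * (2 * X - q * μ) ≤ q * m ^ 2 * (X + R) :=
      mul_le_mul_of_nonneg_left (by linarith [hRlow]) (by positivity)
    linarith [hstep, hstep2]

lemma part1core (m k q ρ n : ℕ) (hm : m * m = 2 * k) (hk : 1 ≤ k)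
    (hq : q = m + 1 + ρ) (hρ1 : 1 ≤ ρ) (hρm : ρ ≤ m) (hn : n = q * m) :
    ∃ D : Finset (Fin n × Finset (Fin n)),
      IsPartialStarDecompOn (⊤ : SimpleGraph (Fin n)) k D ∧
      ∀ x y : Fin n, (s(x, y) ∈ D.biUnion fun p => starEdges p.1 p.2) ↔
        x.val / m ≠ y.val / m := by
  classical
  have hm1 : 1 ≤ m := le_trans hρ1 hρm
  have hq1 : 1 ≤ q := by omega
  -- cross-block ordered pairs
  set P : Finset (Fin n × Fin n) :=
    univ.filter (fun p => p.1.val / m ≠ p.2.val / m) with hP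
  have memP : ∀ p : Fin n × Fin n, p ∈ P ↔ p.1.val / m ≠ p.2.val / m := by
    intro p; rw [hP, mem_filter]; simp
  have hirr : ∀ p ∈ P, p.1 ≠ p.2 := by
    intro p hp h
    rw [memP] at hp
    exact hp (by rw [h])
  have hsymm : ∀ p ∈ P, (p.2, p.1) ∈ P := by
    intro p hp
    rw [memP] at hp ⊢
    exact fun h => hp h.symm
  set τ : Fin n → ℕ := fun v => if v.val % m < ρ then 2 * k else k with hτ
  have hblt : ∀ v : Fin n, v.val / m < q := by
    intro v
    have hv := v.isLt
    have hv2 : v.val < q * m := lt_of_lt_of_eq hv hn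
    exact Nat.div_lt_of_lt_mul (by rw [mul_comm m q]; exact hv2)
  have hdm : ∀ i j : ℕ, j < m → (i * m + j) / m = i ∧ (i * m + j) % m = j := by
    intro i j hj
    constructor
    · rw [add_comm, Nat.add_mul_div_right _ _ (by omega : 0 < m), Nat.div_eq_of_lt hj]
      omega
    · rw [add_comm, Nat.add_mul_mod_self_right, Nat.mod_eq_of_lt hj]
  -- generic block count
  have blockcount : ∀ i, i < q → ∀ (Q : ℕ → Prop) (_ : DecidablePred Q),
      (univ.filter (fun v : Fin n => v.val / m = i ∧ Q (v.val % m))).card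
        = ((range m).filter Q).card := by
    intro i hi Q _
    apply Finset.card_bij (fun v _ => v.val % m)
    · intro v hv
      rw [mem_filter] at hv
      rw [mem_filter, mem_range]
      exact ⟨Nat.mod_lt _ (by omega), hv.2.2⟩
    · intro v hv w hw hvw
      rw [mem_filter] at hv hw
      apply Fin.ext
      have hv' := (Nat.div_add_mod v.val m).symm
      have hw' := (Nat.div_add_mod w.val m).symm
      rw [hv.2.1] at hv'
      rw [hw.2.1] at hw'
      omega
    · intro j hj
      rw [mem_filter, mem_range] at hj
      have hlt : i * m + j < n := by
        rw [hn]
        calc i * m + j < i * m + m := by omega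
          _ = (i + 1) * m := by ring
          _ ≤ q * m := Nat.mul_le_mul_right _ (by omega)
      obtain ⟨hd, hmod⟩ := hdm i j hj.1
      exact ⟨⟨i * m + j, hlt⟩, by rw [mem_filter]; exact ⟨mem_univ _, hd, by rw [hmod]; exact hj.2⟩,
        hmod⟩
  -- fiber size function
  set tf : Finset (Fin n) → ℕ → ℕ := fun T i => (T.filter (fun v => v.val / m = i)).card with htf
  have hsum_t : ∀ T : Finset (Fin n), ∑ i ∈ range q, tf T i = T.card := by
    intro T
    exact (Finset.card_eq_sum_card_fiberwise (fun x _ => mem_range.2 (hblt x))).symm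
  have hgroup : ∀ T : Finset (Fin n),
      ∑ v ∈ T, tf T (v.val / m) = ∑ i ∈ range q, tf T i * tf T i := by
    intro T
    rw [← Finset.sum_fiberwise_of_maps_to (g := fun v : Fin n => v.val / m)
      (fun x _ => mem_range.2 (hblt x)) (fun v => tf T (v.val / m))]
    apply Finset.sum_congr rfl
    intro i _
    rw [Finset.sum_congr rfl (fun v hv => by rw [(mem_filter.1 hv).2]),
      Finset.sum_const, smul_eq_mul]
  have hfib : ∀ T : Finset (Fin n), ∀ v ∈ T,
      ((Pin P T).filter (fun p => p.1 = v)).card + tf T (v.val / m) = T.card := by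
    intro T v hv
    have h1 : ((Pin P T).filter (fun p => p.1 = v)).card
        = (T.filter (fun w => ¬ w.val / m = v.val / m)).card := by
      apply Finset.card_bij (fun p _ => p.2)
      · intro p hp
        rw [mem_filter] at hp
        obtain ⟨hp1, hp2⟩ := hp
        rw [mem_Pin] at hp1
        rw [mem_filter]
        refine ⟨hp1.2.2, ?_⟩
        have hcr := (memP p).1 hp1.1
        rw [hp2] at hcr
        exact fun hh => hcr hh.symm
      · intro p hp p' hp' hpp
        rw [mem_filter] at hp hp'
        exact Prod.ext (hp.2.trans hp'.2.symm) hpp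
      · intro w hw
        rw [mem_filter] at hw
        refine ⟨(v, w), ?_, rfl⟩
        rw [mem_filter, mem_Pin, memP]
        exact ⟨⟨fun hh => hw.2 hh.symm, hv, hw.1⟩, rfl⟩
    have h2 : (T.filter (fun w : Fin n => w.val / m = v.val / m)).card
        + (T.filter (fun w : Fin n => ¬ w.val / m = v.val / m)).card = T.card :=
      Finset.card_filter_add_card_filter_not _
    rw [h1]
    simp only [htf]
    omega
  have hPinsum : ∀ T : Finset (Fin n),
      (Pin P T).card + ∑ i ∈ range q, tf T i * tf T i = T.card * T.card := by
    intro T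
    have h0 : (Pin P T).card = ∑ v ∈ T, ((Pin P T).filter (fun p => p.1 = v)).card :=
      Finset.card_eq_sum_card_fiberwise (fun p hp => (mem_Pin.1 hp).2.1)
    rw [h0, ← hgroup, ← Finset.sum_add_distrib]
    rw [Finset.sum_congr rfl (hfib T), Finset.sum_const, smul_eq_mul]
  -- receivers count
  set Rc : Finset (Fin n) → ℕ := fun T => (T.filter (fun v => v.val % m < ρ)).card with hRc
  have hτsum : ∀ T : Finset (Fin n), ∑ v ∈ T, τ v = k * T.card + k * Rc T := by
    intro T
    have hsplitτ : ∑ v ∈ T, τ v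
        = ∑ v ∈ T, (k + k * (if v.val % m < ρ then 1 else 0)) := by
      apply Finset.sum_congr rfl
      intro v _
      simp only [hτ]
      split_ifs <;> omega
    rw [hsplitτ, Finset.sum_add_distrib, Finset.sum_const, smul_eq_mul]
    have hb : ∑ v ∈ T, (k * if v.val % m < ρ then 1 else 0) = k * Rc T := by
      rw [← Finset.mul_sum, Finset.sum_boole]
      simp only [hRc, Nat.cast_id]
    rw [hb]
    ring
  set μ : ℕ := m - ρ with hμdef
  have hμ : ρ + μ = m := by omega
  have hrange_lt : ((range m).filter (fun j => j < ρ)).card = ρ := by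
    have hrr : (range m).filter (fun j => j < ρ) = range ρ := by
      ext j
      simp only [mem_filter, mem_range]
      omega
    rw [hrr, card_range]
  have hrange_ge : ((range m).filter (fun j => ¬ j < ρ)).card = μ := by
    have h2 : ((range m).filter (fun j => j < ρ)).card
        + ((range m).filter (fun j => ¬ j < ρ)).card = (range m).card :=
      Finset.card_filter_add_card_filter_not _
    rw [card_range] at h2
    omega
  have hNR : ∀ T : Finset (Fin n), T.card ≤ Rc T + q * μ := by
    intro T
    have h1 : (T.filter (fun v : Fin n => ¬ v.val % m < ρ)).card ≤ q * μ := by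
      have h2 : (T.filter (fun v : Fin n => ¬ v.val % m < ρ)).card
          = ∑ i ∈ range q, ((T.filter (fun v : Fin n => ¬ v.val % m < ρ)).filter
            (fun v => v.val / m = i)).card :=
        Finset.card_eq_sum_card_fiberwise (fun x _ => mem_range.2 (hblt x))
      rw [h2]
      calc ∑ i ∈ range q, ((T.filter (fun v : Fin n => ¬ v.val % m < ρ)).filter
            (fun v => v.val / m = i)).card
          ≤ ∑ _i ∈ range q, μ := by
            apply Finset.sum_le_sum
            intro i hi
            calc ((T.filter (fun v : Fin n => ¬ v.val % m < ρ)).filter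
                  (fun v => v.val / m = i)).card
                ≤ (univ.filter (fun v : Fin n => v.val / m = i ∧ ¬ v.val % m < ρ)).card := by
                  apply card_le_card
                  intro v hv
                  rw [mem_filter] at hv
                  rw [mem_filter]
                  exact ⟨mem_univ _, hv.2, (mem_filter.1 hv.1).2⟩
              _ = ((range m).filter (fun j => ¬ j < ρ)).card := by
                  have hbc := blockcount i (mem_range.1 hi) (fun j => ¬ j < ρ) (by infer_instance)
                  beta_reduce at hbc
                  exact hbc
              _ = μ := hrange_ge
        _ = q * μ := by rw [Finset.sum_const, card_range, smul_eq_mul]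
    have h2 : (T.filter (fun v : Fin n => v.val % m < ρ)).card
        + (T.filter (fun v : Fin n => ¬ v.val % m < ρ)).card = T.card :=
      Finset.card_filter_add_card_filter_not _
    simp only [hRc]
    omega
  -- the Hall condition
  have hall : ∀ T : Finset (Fin n), (Pin P T).card ≤ 2 * ∑ v ∈ T, τ v := by
    intro T
    have hps := hPinsum T
    have hst := hsum_t T
    have hnr := hNR T
    have hXn : T.card ≤ q * m := by
      have h3 : T.card ≤ n := le_trans (card_le_card (subset_univ T)) (by
        rw [card_univ]; simp)
      omega
    have hcs : (T.card : ℤ) ^ 2 ≤ (q : ℤ) * ∑ i ∈ range q, ((tf T i : ℤ)) ^ 2 := by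
      have hh := Finset.sum_mul_sq_le_sq_mul_sq (range q) (fun i => (tf T i : ℤ)) (fun _ => 1)
      simp only [mul_one, one_pow] at hh
      rw [Finset.sum_const, card_range, nsmul_eq_mul, mul_one] at hh
      have hsum : ∑ i ∈ range q, (tf T i : ℤ) = (T.card : ℤ) := by
        rw [← hst]
        push_cast
        rfl
      rw [hsum] at hh
      calc (T.card : ℤ) ^ 2 ≤ (∑ i ∈ range q, (tf T i : ℤ) ^ 2) * q := hh
        _ = (q : ℤ) * ∑ i ∈ range q, ((tf T i : ℤ)) ^ 2 := by ring
    have key := arith1 (m : ℤ) (ρ : ℤ) (μ : ℤ) (q : ℤ) (T.card : ℤ) (Rc T : ℤ)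
      (by exact_mod_cast hq) (by exact_mod_cast hρ1)
      (by exact_mod_cast hμ) (by positivity) (by positivity)
      (by exact_mod_cast hXn) (by positivity)
      (by exact_mod_cast hnr)
    have hPinZ : ((Pin P T).card : ℤ) + ∑ i ∈ range q, ((tf T i : ℤ)) ^ 2
        = (T.card : ℤ) ^ 2 := by
      have hcast := congrArg (fun x : ℕ => (x : ℤ)) hps
      push_cast at hcast
      have hsq : ∑ i ∈ range q, ((tf T i : ℤ)) ^ 2
          = ∑ i ∈ range q, ((tf T i : ℤ) * (tf T i : ℤ)) :=
        Finset.sum_congr rfl (fun i _ => by ring)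
      rw [hsq, hcast]
      ring
    have hq0 : 0 < (q : ℤ) := by exact_mod_cast hq1
    have hmZ : (m : ℤ) * m = 2 * k := by exact_mod_cast hm
    have hgoalZ : ((Pin P T).card : ℤ) ≤ 2 * ((k : ℤ) * T.card + k * Rc T) := by
      have hmul : (q : ℤ) * ((Pin P T).card : ℤ)
          ≤ (q : ℤ) * (2 * ((k : ℤ) * T.card + k * Rc T)) := by
        have e1 : (q : ℤ) * ((Pin P T).card : ℤ)
            = (q:ℤ) * (T.card:ℤ)^2 - (q:ℤ) * ∑ i ∈ range q, ((tf T i : ℤ)) ^ 2 := by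
          rw [← hPinZ]; ring
        have e2 : (q : ℤ) * ((Pin P T).card : ℤ) ≤ ((q:ℤ) - 1) * (T.card:ℤ)^2 := by
          rw [e1]
          linarith [hcs]
        have e3 : ((q:ℤ) - 1) * (T.card:ℤ)^2 ≤ (q:ℤ) * (m:ℤ)^2 * ((T.card:ℤ) + (Rc T : ℤ)) := key
        have e4 : (q:ℤ) * (m:ℤ)^2 * ((T.card:ℤ) + (Rc T : ℤ))
            = (q : ℤ) * (2 * ((k : ℤ) * T.card + k * Rc T)) := by
          linear_combination ((q:ℤ) * ((T.card:ℤ) + (Rc T : ℤ))) * hmZ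
        linarith [e2, e3]
      exact le_of_mul_le_mul_left hmul hq0
    rw [hτsum T]
    exact_mod_cast hgoalZ
  -- total
  have htot : P.card = 2 * ∑ v : Fin n, τ v := by
    have hPu : Pin P univ = P := by
      ext p; rw [mem_Pin]; simp
    have hcardu : (univ : Finset (Fin n)).card = n := by rw [card_univ]; simp
    have htfu : ∀ i ∈ range q, tf univ i = m := by
      intro i hi
      have hbc := blockcount i (mem_range.1 hi) (fun _ => True) (by infer_instance)
      simp only [and_true, Finset.filter_true, card_range] at hbc
      simp only [htf]
      exact hbc
    have hsumtf : ∑ i ∈ range q, tf univ i * tf univ i = q * (m * m) := by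
      rw [Finset.sum_congr rfl (fun i hi => by rw [htfu i hi])]
      rw [Finset.sum_const, card_range, smul_eq_mul]
    have hRu : Rc univ = q * ρ := by
      have h2 : (univ.filter (fun v : Fin n => v.val % m < ρ)).card
          = ∑ i ∈ range q, ((univ.filter (fun v : Fin n => v.val % m < ρ)).filter
            (fun v => v.val / m = i)).card :=
        Finset.card_eq_sum_card_fiberwise (fun x _ => mem_range.2 (hblt x))
      have h4 : ∀ i ∈ range q, ((univ.filter (fun v : Fin n => v.val % m < ρ)).filter
            (fun v => v.val / m = i)).card = ρ := by
        intro i hi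
        have h3 : (univ.filter (fun v : Fin n => v.val % m < ρ)).filter (fun v => v.val / m = i)
            = univ.filter (fun v : Fin n => v.val / m = i ∧ v.val % m < ρ) := by
          rw [Finset.filter_filter]
          apply Finset.filter_congr
          intro v _
          tauto
        have hbc := blockcount i (mem_range.1 hi) (fun j => j < ρ) (by infer_instance)
        beta_reduce at hbc
        rw [h3, hbc, hrange_lt]
      simp only [hRc]
      rw [h2, Finset.sum_congr rfl h4, Finset.sum_const, card_range, smul_eq_mul]
    have h1 := hPinsum univ
    rw [hPu, hsumtf, hcardu] at h1
    have hτu := hτsum univ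
    rw [hcardu, hRu] at hτu
    rw [hτu]
    have hmZ : (m : ℤ) * m = 2 * k := by exact_mod_cast hm
    have h6 : (n : ℤ) * n = 2 * ((k:ℤ) * n + k * (q * ρ)) + q * (m * m) := by
      have hnZ : (n : ℤ) = ((q : ℤ)) * m := by exact_mod_cast hn
      have hqZ : (q : ℤ) = (m : ℤ) + 1 + ρ := by exact_mod_cast hq
      rw [hnZ, hqZ]
      linear_combination (((m:ℤ) + 1 + ρ) * ((m:ℤ) + ρ)) * hmZ
    have h5 : (P.card : ℤ) + (q : ℤ) * (m * m) = (n : ℤ) * n := by exact_mod_cast h1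
    have : (P.card : ℤ) = 2 * ((k:ℤ) * n + k * (q * ρ)) := by omega
    exact_mod_cast this
  -- apply the orientation theorem
  obtain ⟨A, hAP, hAcard, hAxor⟩ := orient P.card P τ rfl hirr hsymm hall htot
  -- star construction
  have hAk : ∀ v : Fin n, ¬ (v.val % m < ρ) → (A v).card = k := by
    intro v h
    rw [hAcard v, hτ]
    simp only
    rw [if_neg h]
  have hAk2 : ∀ v : Fin n, (v.val % m < ρ) → (A v).card = 2 * k := by
    intro v h
    rw [hAcard v, hτ]
    simp only
    rw [if_pos h]
  have hsplit : ∀ v : Fin n, ∃ B : Finset (Fin n), B ⊆ A v ∧ B.card = k ∧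
      ((v.val % m < ρ) → (A v \ B).card = k) := by
    intro v
    by_cases h : v.val % m < ρ
    · obtain ⟨B, hB1, hB2⟩ := Finset.exists_subset_card_eq
        (show k ≤ (A v).card by rw [hAk2 v h]; omega)
      refine ⟨B, hB1, hB2, fun _ => ?_⟩
      rw [Finset.card_sdiff_of_subset hB1, hB2, hAk2 v h]
      omega
    · exact ⟨A v, subset_rfl, hAk v h, fun hr => absurd hr h⟩
  choose B hBsub hBcard hBrest using hsplit
  set st : Fin n → Finset (Fin n × Finset (Fin n)) :=
    fun v => if v.val % m < ρ then {(v, B v), (v, A v \ B v)} else {(v, A v)} with hst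
  set D := univ.biUnion st with hD
  have hstmem : ∀ v : Fin n, ∀ p ∈ st v, p.1 = v ∧ p.2 ⊆ A v ∧ p.2.card = k := by
    intro v p hp
    rw [hst] at hp
    simp only at hp
    by_cases h : v.val % m < ρ
    · rw [if_pos h] at hp
      rcases mem_insert.1 hp with rfl | hp
      · exact ⟨rfl, hBsub v, hBcard v⟩
      · rw [mem_singleton] at hp
        subst hp
        exact ⟨rfl, sdiff_subset, hBrest v h⟩
    · rw [if_neg h, mem_singleton] at hp
      subst hp
      exact ⟨rfl, subset_rfl, hAk v h⟩
  have hDmem : ∀ p ∈ D, p.2 ⊆ A p.1 ∧ p.2.card = k := by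
    intro p hp
    rw [hD, mem_biUnion] at hp
    obtain ⟨v, _, hpv⟩ := hp
    obtain ⟨h1, h2, h3⟩ := hstmem v p hpv
    rw [h1]
    exact ⟨h2, h3⟩
  have hDst : ∀ p ∈ D, p ∈ st p.1 := by
    intro p hp
    rw [hD, mem_biUnion] at hp
    obtain ⟨v, _, hpv⟩ := hp
    have h1 := (hstmem v p hpv).1
    rwa [h1]
  refine ⟨D, ⟨?_, ?_⟩, ?_⟩
  · -- stars
    intro p hp
    obtain ⟨hsub, hcard⟩ := hDmem p hp
    refine ⟨hcard, ?_⟩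
    intro w hw
    have hwP := hAP p.1 w (hsub hw)
    rw [memP] at hwP
    have hne : p.1 ≠ w := fun h => hwP (by rw [h])
    simp only [SimpleGraph.top_adj]
    exact hne
  · -- disjointness
    intro p hp r hr hne
    rw [Finset.disjoint_left]
    intro e hep her
    rw [starEdges, mem_image] at hep her
    obtain ⟨a, ha, hea⟩ := hep
    obtain ⟨b, hb, heb⟩ := her
    have h := hea.trans heb.symm
    rw [Sym2.eq_iff] at h
    rcases h with ⟨h1, h2⟩ | ⟨h1, h2⟩
    · -- same center, same leaf
      subst h2
      have hpst := hDst p hp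
      have hrst := hDst r hr
      rw [h1] at hpst
      rw [hst] at hpst hrst
      simp only at hpst hrst
      by_cases hc : r.1.val % m < ρ
      · rw [if_pos hc] at hpst hrst
        have hpcase : p = (r.1, B r.1) ∨ p = (r.1, A r.1 \ B r.1) := by
          rcases mem_insert.1 hpst with hh | hh
          · exact Or.inl hh
          · exact Or.inr (mem_singleton.1 hh)
        have hrcase : r = (r.1, B r.1) ∨ r = (r.1, A r.1 \ B r.1) := by
          rcases mem_insert.1 hrst with hh | hh
          · exact Or.inl hh
          · exact Or.inr (mem_singleton.1 hh)
        rcases hpcase with hp2 | hp2 <;> rcases hrcase with hr2 | hr2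
        · exact hne (hp2.trans hr2.symm)
        · rw [hp2] at ha
          rw [hr2] at hb
          simp only at ha hb
          exact (mem_sdiff.1 hb).2 ha
        · rw [hp2] at ha
          rw [hr2] at hb
          simp only at ha hb
          exact (mem_sdiff.1 ha).2 hb
        · exact hne (hp2.trans hr2.symm)
      · rw [if_neg hc] at hpst hrst
        exact hne ((mem_singleton.1 hpst).trans (mem_singleton.1 hrst).symm)
    · -- crossing: contradiction with xor
      have haA : a ∈ A p.1 := (hDmem p hp).1 ha
      have hbA : b ∈ A r.1 := (hDmem r hr).1 hb
      rw [← h1] at hbA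
      rw [h2] at haA
      have hPmem : (p.1, r.1) ∈ P := hAP p.1 r.1 haA
      have hx := hAxor (p.1, r.1) hPmem
      simp only at hx
      exact (hx.1 haA) hbA
  · -- coverage
    intro x y
    constructor
    · intro h
      rw [mem_biUnion] at h
      obtain ⟨p, hpD, hep⟩ := h
      rw [starEdges, mem_image] at hep
      obtain ⟨a, ha, hea⟩ := hep
      have haP : (p.1, a) ∈ P := hAP p.1 a ((hDmem p hpD).1 ha)
      rw [memP] at haP
      rw [Sym2.eq_iff] at hea
      rcases hea with ⟨h1, h2⟩ | ⟨h1, h2⟩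
      · rw [← h1, ← h2]; exact haP
      · rw [← h1, ← h2]; exact fun hh => haP hh.symm
    · intro hxy
      have hxyP : (x, y) ∈ P := (memP _).2 hxy
      have hmain : ∀ v w : Fin n, w ∈ A v →
          s(v, w) ∈ D.biUnion fun p => starEdges p.1 p.2 := by
        intro v w hw
        rw [mem_biUnion]
        by_cases hc : v.val % m < ρ
        · by_cases hB : w ∈ B v
          · refine ⟨(v, B v), ?_, ?_⟩
            · rw [hD, mem_biUnion]
              refine ⟨v, mem_univ v, ?_⟩
              rw [hst]
              simp only
              rw [if_pos hc]
              exact mem_insert_self _ _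
            · rw [starEdges, mem_image]
              exact ⟨w, hB, rfl⟩
          · refine ⟨(v, A v \ B v), ?_, ?_⟩
            · rw [hD, mem_biUnion]
              refine ⟨v, mem_univ v, ?_⟩
              rw [hst]
              simp only
              rw [if_pos hc]
              exact mem_insert_of_mem (mem_singleton_self _)
            · rw [starEdges, mem_image]
              exact ⟨w, mem_sdiff.2 ⟨hw, hB⟩, rfl⟩
        · refine ⟨(v, A v), ?_, ?_⟩
          · rw [hD, mem_biUnion]
            refine ⟨v, mem_univ v, ?_⟩
            rw [hst]
            simp only
            rw [if_neg hc]
            exact mem_singleton_self _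
          · rw [starEdges, mem_image]
            exact ⟨w, hw, rfl⟩
      by_cases hyA : y ∈ A x
      · exact hmain x y hyA
      · have hxA : x ∈ A y := by
          by_contra hxA
          exact hyA ((hAxor (x, y) hxyP).2 hxA)
        have hres := hmain y x hxA
        rwa [Sym2.eq_swap] at hres


lemma blockcard (m q n i : ℕ) (hn : n = q * m) (hm1 : 1 ≤ m) (hi : i < q) :
    ((univ : Finset (Fin n)).filter (fun v => v.val / m = i)).card = m := by
  have key : ((univ : Finset (Fin n)).filter (fun v => v.val / m = i)).card
      = (range m).card := by
    apply Finset.card_bij (fun v _ => v.val % m)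
    · intro v _
      rw [mem_range]
      exact Nat.mod_lt _ (by omega)
    · intro v hv w hw hvw
      rw [mem_filter] at hv hw
      apply Fin.ext
      have hv' := (Nat.div_add_mod v.val m).symm
      have hw' := (Nat.div_add_mod w.val m).symm
      rw [hv.2] at hv'
      rw [hw.2] at hw'
      omega
    · intro j hj
      rw [mem_range] at hj
      have hlt : i * m + j < n := by
        rw [hn]
        calc i * m + j < i * m + m := by omega
          _ = (i + 1) * m := by ring
          _ ≤ q * m := Nat.mul_le_mul_right _ (by omega)
      refine ⟨⟨i * m + j, hlt⟩, ?_, ?_⟩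
      · rw [mem_filter]
        refine ⟨mem_univ _, ?_⟩
        simp only
        rw [add_comm, Nat.add_mul_div_right _ _ (by omega : 0 < m), Nat.div_eq_of_lt hj]
        omega
      · simp only
        rw [add_comm, Nat.add_mul_mod_self_right, Nat.mod_eq_of_lt hj]
  rw [key, card_range]

lemma filter_sum_card {α β : Type*} [Fintype α] [Fintype β] [DecidableEq α] [DecidableEq β]
    (Pd : α ⊕ β → Prop) [DecidablePred Pd] :
    ((univ : Finset (α ⊕ β)).filter Pd).card
      = (univ.filter (fun a => Pd (Sum.inl a))).card
        + (univ.filter (fun b => Pd (Sum.inr b))).card := by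
  have hsplit : (univ : Finset (α ⊕ β)).filter Pd
      = ((univ.filter (fun a => Pd (Sum.inl a))).image Sum.inl)
        ∪ ((univ.filter (fun b => Pd (Sum.inr b))).image Sum.inr) := by
    ext x
    cases x with
    | inl a => simp
    | inr b => simp
  rw [hsplit, card_union_of_disjoint, card_image_of_injective _ Sum.inl_injective,
    card_image_of_injective _ Sum.inr_injective]
  rw [Finset.disjoint_left]
  rintro x hx hy
  rw [mem_image] at hx hy
  obtain ⟨a, -, rfl⟩ := hx
  obtain ⟨b, -, hb⟩ := hy
  exact Sum.inl_ne_inr hb.symm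

lemma part2core (t k m n q : ℕ) (hkt : k = 2 ^ t) (hm : m * m = 2 * k) (hk : 8 ≤ k)
    (hnq : n = q * m) (hq1 : 2 * (m * m) + 2 * q + 2 ≤ q * q)
    (L : SimpleGraph (Fin n))
    (hL : ∀ x y : Fin n, L.Adj x y ↔ x ≠ y ∧ x.val / m = y.val / m)
    (s : ℕ) (hs : n + s < 6 * k) :
    ¬ ∃ D, IsStarDecompOn (joinK L s) k D := by
  classical
  rintro ⟨D, ⟨⟨hstars, hdisj⟩, hcover⟩⟩
  set G := joinK L s with hG
  have hm2 : 2 ≤ m := by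
    by_contra h
    push_neg at h
    interval_cases m <;> omega
  have hm1 : 1 ≤ m := by omega
  have hq2 : m + 1 ≤ q := by
    by_contra h
    push_neg at h
    have hqq : q * q ≤ m * m := Nat.mul_le_mul (by omega) (by omega)
    linarith [hq1, hqq]
  have hq0 : 1 ≤ q := by omega
  have hn2 : m * m + m ≤ n := by
    rw [hnq]
    calc m * m + m = (m + 1) * m := by ring
      _ ≤ q * m := Nat.mul_le_mul_right _ hq2
  -- adjacency
  have hadj_ll : ∀ a b : Fin n, G.Adj (Sum.inl a) (Sum.inl b) ↔
      (a ≠ b ∧ a.val / m = b.val / m) := by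
    intro a b
    rw [hG]
    constructor
    · rintro ⟨hne, h⟩
      have := h a b rfl rfl
      rw [hL] at this
      exact this
    · intro h
      refine ⟨by simp [h.1], ?_⟩
      rintro a' b' ha' hb'
      obtain rfl := Sum.inl_injective ha'
      obtain rfl := Sum.inl_injective hb'
      rw [hL]
      exact h
  have hadj_inr : ∀ (c : Fin s) (y : Fin n ⊕ Fin s),
      G.Adj (Sum.inr c) y ↔ y ≠ Sum.inr c := by
    intro c y
    rw [hG]
    constructor
    · rintro ⟨hne, -⟩
      exact hne.symm
    · intro hne
      exact ⟨hne.symm, by rintro a b hab -; exact absurd hab (by simp)⟩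
  have hadj_lr : ∀ (a : Fin n) (c : Fin s), G.Adj (Sum.inl a) (Sum.inr c) := by
    intro a c
    exact (((hadj_inr c (Sum.inl a)).2 (by simp)).symm)
  -- ordered adjacent pairs
  set OP : Finset ((Fin n ⊕ Fin s) × (Fin n ⊕ Fin s)) :=
    univ.filter (fun p => G.Adj p.1 p.2) with hOP
  have memOP : ∀ p : (Fin n ⊕ Fin s) × (Fin n ⊕ Fin s), p ∈ OP ↔ G.Adj p.1 p.2 := by
    intro p; rw [hOP, mem_filter]; simp
  -- each star's ordered pairs
  set opairs : (Fin n ⊕ Fin s) × Finset (Fin n ⊕ Fin s)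
      → Finset ((Fin n ⊕ Fin s) × (Fin n ⊕ Fin s)) :=
    fun p => p.2.image (fun v => (p.1, v)) ∪ p.2.image (fun v => (v, p.1)) with hopairs
  have hopcard : ∀ p ∈ D, (opairs p).card = 2 * k := by
    intro p hp
    obtain ⟨hcard, hadj⟩ := hstars p hp
    rw [hopairs]
    simp only
    rw [card_union_of_disjoint, card_image_of_injective _ (fun a b h => (Prod.ext_iff.1 h).2),
      card_image_of_injective _ (fun a b h => (Prod.ext_iff.1 h).1), hcard]
    · ring
    · rw [Finset.disjoint_left]
      rintro x hx hy
      rw [mem_image] at hx hy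
      obtain ⟨v, hv, rfl⟩ := hx
      obtain ⟨w, hw, hwx⟩ := hy
      have h1 : w = p.1 := (Prod.ext_iff.1 hwx).1
      have h2 : p.1 = v := by
        have h3 := (Prod.ext_iff.1 hwx).2
        simpa using h3
      rw [← h2] at hv
      exact G.irrefl (hadj p.1 hv)
  have hopsub : ∀ p, ∀ pr ∈ opairs p, s(pr.1, pr.2) ∈ starEdges p.1 p.2 := by
    intro p pr hxy
    rw [hopairs] at hxy
    simp only [mem_union, mem_image] at hxy
    rw [starEdges, mem_image]
    rcases hxy with ⟨v, hv, hveq⟩ | ⟨v, hv, hveq⟩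
    · refine ⟨v, hv, ?_⟩
      rw [← hveq]
    · refine ⟨v, hv, ?_⟩
      rw [← hveq]
      exact Sym2.eq_swap
  have hOPeq : OP = D.biUnion opairs := by
    ext ⟨x, y⟩
    rw [memOP, mem_biUnion]
    constructor
    · intro hxy
      have hedge : s(x, y) ∈ G.edgeSet := hxy
      obtain ⟨p, hpD, hep⟩ := hcover _ hedge
      rw [starEdges, mem_image] at hep
      obtain ⟨v, hv, hveq⟩ := hep
      rw [Sym2.eq_iff] at hveq
      refine ⟨p, hpD, ?_⟩
      rw [hopairs]
      simp only [mem_union, mem_image]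
      rcases hveq with ⟨h1, h2⟩ | ⟨h1, h2⟩
      · exact Or.inl ⟨v, hv, by rw [h1, h2]⟩
      · exact Or.inr ⟨v, hv, by rw [h1, h2]⟩
    · rintro ⟨p, hpD, hxyp⟩
      obtain ⟨hcard, hadj⟩ := hstars p hpD
      rw [hopairs] at hxyp
      simp only [mem_union, mem_image] at hxyp
      rcases hxyp with ⟨v, hv, hveq⟩ | ⟨v, hv, hveq⟩
      · obtain ⟨h1, h2⟩ := Prod.ext_iff.1 hveq
        rw [← h1, ← h2]
        exact hadj v hv
      · obtain ⟨h1, h2⟩ := Prod.ext_iff.1 hveq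
        rw [← h1, ← h2]
        exact (hadj v hv).symm
  have hOPcard : OP.card = 2 * k * D.card := by
    rw [hOPeq, Finset.card_biUnion]
    · rw [Finset.sum_congr rfl hopcard, Finset.sum_const, smul_eq_mul]
      ring
    · intro p hp r hr hne
      show Disjoint (opairs p) (opairs r)
      rw [Finset.disjoint_left]
      intro a hap har
      have h1 := hopsub p a hap
      have h2 := hopsub r a har
      exact Finset.disjoint_left.1 (hdisj p hp r hr hne) h1 h2
  -- degree count
  have hfib : ∀ x : Fin n ⊕ Fin s, (OP.filter (fun p => p.1 = x)).card
      = (univ.filter (fun y : Fin n ⊕ Fin s => G.Adj x y)).card := by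
    intro x
    apply Finset.card_bij (fun p _ => p.2)
    · intro p hp
      rw [mem_filter] at hp
      rw [mem_filter]
      refine ⟨mem_univ _, ?_⟩
      rw [← hp.2]
      exact (memOP p).1 hp.1
    · intro p hp p' hp' hpp
      rw [mem_filter] at hp hp'
      exact Prod.ext (hp.2.trans hp'.2.symm) hpp
    · intro y hy
      rw [mem_filter] at hy
      exact ⟨(x, y), by rw [mem_filter, memOP]; exact ⟨hy.2, rfl⟩, rfl⟩
  have hOPsum : OP.card = ∑ x : Fin n ⊕ Fin s,
      (univ.filter (fun y : Fin n ⊕ Fin s => G.Adj x y)).card := by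
    rw [Finset.card_eq_sum_card_fiberwise (f := Prod.fst) (fun p _ => mem_univ p.1)]
    exact Finset.sum_congr rfl (fun x _ => hfib x)
  have hcardW : Fintype.card (Fin n ⊕ Fin s) = n + s := by simp
  have hdeginr : ∀ c : Fin s, (univ.filter (fun y : Fin n ⊕ Fin s => G.Adj (Sum.inr c) y)).card
      = n + s - 1 := by
    intro c
    have he : univ.filter (fun y : Fin n ⊕ Fin s => G.Adj (Sum.inr c) y) = univ.erase (Sum.inr c) := by
      ext y
      rw [mem_filter, mem_erase, hadj_inr]
      simp
    rw [he, card_erase_of_mem (mem_univ _), card_univ, hcardW]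
  have hdeginl : ∀ a : Fin n, (univ.filter (fun y : Fin n ⊕ Fin s => G.Adj (Sum.inl a) y)).card
      = (m - 1) + s := by
    intro a
    rw [filter_sum_card]
    have h1 : (univ.filter (fun b : Fin n => G.Adj (Sum.inl a) (Sum.inl b))).card = m - 1 := by
      have he : univ.filter (fun b : Fin n => G.Adj (Sum.inl a) (Sum.inl b))
          = (univ.filter (fun b : Fin n => b.val / m = a.val / m)).erase a := by
        ext b
        rw [mem_filter, mem_erase, mem_filter, hadj_ll]
        constructor
        · rintro ⟨-, hne, hbl⟩
          exact ⟨hne.symm, mem_univ _, hbl.symm⟩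
        · rintro ⟨hne, -, hbl⟩
          exact ⟨mem_univ _, hne.symm, hbl.symm⟩
      have hiq : a.val / m < q :=
        Nat.div_lt_of_lt_mul (by rw [mul_comm m q]; exact lt_of_lt_of_eq a.isLt hnq)
      have hamem : a ∈ univ.filter (fun b : Fin n => b.val / m = a.val / m) := by
        rw [mem_filter]; exact ⟨mem_univ _, rfl⟩
      rw [he, card_erase_of_mem hamem, blockcard m q n (a.val / m) hnq (by omega) hiq]
    have h2 : (univ.filter (fun c : Fin s => G.Adj (Sum.inl a) (Sum.inr c))).card = s := by
      rw [Finset.filter_true_of_mem (fun c _ => hadj_lr a c), card_univ, Fintype.card_fin]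
    rw [h1, h2]
  have hN1 : OP.card = n * ((m - 1) + s) + s * (n + s - 1) := by
    rw [hOPsum, Fintype.sum_sum_type]
    rw [Finset.sum_congr rfl (fun a _ => hdeginl a), Finset.sum_congr rfl (fun c _ => hdeginr c)]
    rw [Finset.sum_const, Finset.sum_const, card_univ, card_univ, Fintype.card_fin,
      Fintype.card_fin, smul_eq_mul, smul_eq_mul]
  -- lower bound on number of stars
  set Zs : Finset (Fin n ⊕ Fin s) :=
    univ.filter (fun x : Fin n ⊕ Fin s => ∀ p ∈ D, p.1 ≠ x) with hZs
  have hZind : ∀ x ∈ Zs, ∀ y ∈ Zs, G.Adj x y → False := by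
    intro x hx y hy hxy
    have hedge : s(x, y) ∈ G.edgeSet := hxy
    obtain ⟨p, hpD, hep⟩ := hcover _ hedge
    rw [starEdges, mem_image] at hep
    obtain ⟨v, hv, hveq⟩ := hep
    rw [Sym2.eq_iff] at hveq
    rw [hZs, mem_filter] at hx hy
    rcases hveq with ⟨h1, -⟩ | ⟨h1, -⟩
    · exact hx.2 p hpD h1
    · exact hy.2 p hpD h1
  have hZcard : Zs.card ≤ q := by
    by_cases hc : ∃ c : Fin s, Sum.inr c ∈ Zs
    · obtain ⟨c, hcZ⟩ := hc
      have hsub : Zs ⊆ ({Sum.inr c} : Finset (Fin n ⊕ Fin s)) := by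
        intro z hz
        rw [mem_singleton]
        by_contra hne
        exact hZind z hz _ hcZ (((hadj_inr c z).2 hne).symm)
      calc Zs.card ≤ 1 := by
            calc Zs.card ≤ ({Sum.inr c} : Finset (Fin n ⊕ Fin s)).card := card_le_card hsub
              _ = 1 := card_singleton _
        _ ≤ q := hq0
    · push_neg at hc
      have hmap : ∀ x ∈ Zs, (Sum.elim (fun a : Fin n => a.val / m) (fun _ => 0)) x ∈ range q := by
        intro x hx
        cases x with
        | inl a =>
          simp only [Sum.elim_inl, mem_range]
          exact Nat.div_lt_of_lt_mul (by rw [mul_comm m q]; exact lt_of_lt_of_eq a.isLt hnq)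
        | inr c => exact absurd hx (fun h => hc c h)
      have hinj : ∀ x ∈ Zs, ∀ y ∈ Zs,
          (Sum.elim (fun a : Fin n => a.val / m) (fun _ => 0)) x
            = (Sum.elim (fun a : Fin n => a.val / m) (fun _ => 0)) y → x = y := by
        intro x hx y hy hxy
        cases x with
        | inl a =>
          cases y with
          | inl b =>
            simp only [Sum.elim_inl] at hxy
            by_contra hne
            have hab : a ≠ b := fun h => hne (by rw [h])
            exact hZind _ hx _ hy ((hadj_ll a b).2 ⟨hab, hxy⟩)
          | inr c => exact absurd hy (fun h => hc c h)
        | inr c => exact absurd hx (fun h => hc c h)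
      calc Zs.card ≤ (range q).card := Finset.card_le_card_of_injOn _ hmap hinj
        _ = q := card_range q
  have hDZ : n + s ≤ D.card + q := by
    have hchoice : ∀ x : Fin n ⊕ Fin s, ∃ p : (Fin n ⊕ Fin s) × Finset (Fin n ⊕ Fin s),
        x ∈ univ \ Zs → p ∈ D ∧ p.1 = x := by
      intro x
      by_cases hx : x ∈ univ \ Zs
      · rw [mem_sdiff, hZs, mem_filter] at hx
        obtain ⟨hxu, hxz⟩ := hx
        push_neg at hxz
        obtain ⟨p, hpD, hpx⟩ := hxz hxu
        exact ⟨p, fun _ => ⟨hpD, hpx⟩⟩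
      · exact ⟨(x, ∅), fun h => absurd h hx⟩
    choose f hf using hchoice
    have hge : (univ \ Zs).card ≤ D.card :=
      Finset.card_le_card_of_injOn f (fun x hx => (hf x hx).1)
        (fun x hx y hy hxy => by
          have h1 := (hf x hx).2
          have h2 := (hf y hy).2
          rw [← h1, ← h2, hxy])
    have hsd : (univ \ Zs).card = (n + s) - Zs.card := by
      rw [card_sdiff_of_subset (subset_univ _), card_univ, hcardW]
    omega
  -- arithmetic endgame
  have hn1 : 1 ≤ n := by omega
  set w := n + s with hw
  have hw1 : 1 ≤ w := by omega
  have hNZ : (OP.card : ℤ) = (w : ℤ) * ((w : ℤ) - 1) + (n : ℤ) * m - (n : ℤ) * n := by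
    have hN1' := hN1
    zify [hm1, hw1] at hN1'
    rw [hN1']
    have hwZ : (w : ℤ) = (n : ℤ) + s := by rw [hw]; push_cast; ring
    rw [hwZ]
    ring
  have hOPZ : (OP.card : ℤ) = 2 * (k : ℤ) * D.card := by exact_mod_cast hOPcard
  have hmZ : (m : ℤ) * m = 2 * k := by exact_mod_cast hm
  have hnZ : (n : ℤ) = (q : ℤ) * m := by exact_mod_cast hnq
  have hq1Z : 2 * ((m : ℤ) * m) + 2 * q + 2 ≤ (q : ℤ) * q := by exact_mod_cast hq1
  have hwwZ : (w : ℤ) * ((w : ℤ) - 1)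
      = (m : ℤ) * m * ((D.card : ℤ) + (q : ℤ) * q - q) := by
    have e5 : (n : ℤ) * n - (n : ℤ) * m = (m : ℤ) * m * ((q : ℤ) * q - q) := by
      rw [hnZ]; ring
    have e6 : 2 * (k : ℤ) * D.card = (m : ℤ) * m * D.card := by rw [hmZ]
    linear_combination hOPZ - hNZ + e5 + e6
  -- divisibility
  have hdvd : m * m ∣ w * (w - 1) := by
    have hcast : ((w * (w - 1) : ℕ) : ℤ) = (w : ℤ) * ((w : ℤ) - 1) := by
      push_cast [hw1]
      ring
    have h1 : ((m * m : ℕ) : ℤ) ∣ ((w * (w - 1) : ℕ) : ℤ) := by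
      rw [hcast, hwwZ]
      exact ⟨(D.card : ℤ) + (q : ℤ) * q - q, by push_cast; ring⟩
    exact_mod_cast h1
  have hppow : m * m = 2 ^ (t + 1) := by
    rw [hm, hkt, pow_succ]
    ring
  have hww_bounds : m * m < w ∧ w < 3 * (m * m) ∧ m * m + 1 < w := by
    refine ⟨?_, ?_, ?_⟩
    · omega
    · have h6k : 6 * k = 3 * (m * m) := by omega
      omega
    · omega
  obtain ⟨hwlow, hwhigh, hwlow2⟩ := hww_bounds
  have hwcase : w = 2 * (m * m) ∨ w = 2 * (m * m) + 1 := by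
    have hdvd2 : 2 ^ (t + 1) ∣ w * (w - 1) := hppow ▸ hdvd
    have hmm0 : 0 < m * m := by positivity
    rcases Nat.even_or_odd w with hpar | hpar
    · -- w even, w-1 odd, so m*m ∣ w
      have hodd : ¬ (2 : ℕ) ∣ (w - 1) := by
        rcases hpar with ⟨r, hr⟩
        omega
      have hcop : Nat.Coprime (2 ^ (t + 1)) (w - 1) :=
        Nat.Coprime.pow_left _ ((Nat.prime_two.coprime_iff_not_dvd).2 hodd)
      have hdw : 2 ^ (t + 1) ∣ w := hcop.dvd_of_dvd_mul_right hdvd2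
      rw [← hppow] at hdw
      obtain ⟨c, hc⟩ := hdw
      have hcl : 1 < c := by
        by_contra hcl
        push_neg at hcl
        interval_cases c <;> omega
      have hcu : c < 3 := by
        by_contra hcu
        push_neg at hcu
        have h3 : m * m * 3 ≤ m * m * c := Nat.mul_le_mul_left _ hcu
        omega
      have hc2 : c = 2 := by omega
      subst hc2
      left
      omega
    · -- w odd, so m*m ∣ w-1
      have hodd : ¬ (2 : ℕ) ∣ w := by
        rcases hpar with ⟨r, hr⟩
        omega
      have hcop : Nat.Coprime (2 ^ (t + 1)) w :=
        Nat.Coprime.pow_left _ ((Nat.prime_two.coprime_iff_not_dvd).2 hodd)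
      have hdw : 2 ^ (t + 1) ∣ (w - 1) := hcop.dvd_of_dvd_mul_left hdvd2
      rw [← hppow] at hdw
      obtain ⟨c, hc⟩ := hdw
      have hcl : 1 < c := by
        by_contra hcl
        push_neg at hcl
        interval_cases c <;> omega
      have hcu : c < 3 := by
        by_contra hcu
        push_neg at hcu
        have h3 : m * m * 3 ≤ m * m * c := Nat.mul_le_mul_left _ hcu
        omega
      have hc2 : c = 2 := by omega
      subst hc2
      right
      omega
  -- final contradiction
  have hDge : (w : ℤ) - q ≤ (D.card : ℤ) := by
    have := hDZ
    push_cast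
    omega
  have hOPge : (m : ℤ) * m * ((w : ℤ) - q) ≤ (OP.card : ℤ) := by
    calc (m : ℤ) * m * ((w : ℤ) - q) ≤ (m : ℤ) * m * D.card := by
          apply mul_le_mul_of_nonneg_left hDge (by positivity)
      _ = 2 * (k : ℤ) * D.card := by rw [hmZ]
      _ = (OP.card : ℤ) := hOPZ.symm
  have hmm2Z : (2 : ℤ) ≤ (m : ℤ) := by exact_mod_cast hm2
  rcases hwcase with hwval | hwval
  · have hwZ : (w : ℤ) = 2 * ((m : ℤ) * m) := by exact_mod_cast hwval
    have hiden : (m : ℤ) * m * ((w : ℤ) - q) - ((w : ℤ) * ((w : ℤ) - 1) + (n : ℤ) * m - (n : ℤ) * n)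
        = (m : ℤ) * m * ((q : ℤ) * q - 2 * q - 2 * ((m : ℤ) * m) + 2) := by
      rw [hwZ, hnZ]
      ring
    have hpos : 0 < (m : ℤ) * m * ((q : ℤ) * q - 2 * q - 2 * ((m : ℤ) * m) + 2) := by
      apply mul_pos (by positivity)
      linarith [hq1Z]
    linarith [hOPge, hNZ, hiden, hpos]
  · have hwZ : (w : ℤ) = 2 * ((m : ℤ) * m) + 1 := by exact_mod_cast hwval
    have hiden : (m : ℤ) * m * ((w : ℤ) - q) - ((w : ℤ) * ((w : ℤ) - 1) + (n : ℤ) * m - (n : ℤ) * n)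
        = (m : ℤ) * m * ((q : ℤ) * q - 2 * q - 2 * ((m : ℤ) * m) - 1) := by
      rw [hwZ, hnZ]
      ring
    have hpos : 0 < (m : ℤ) * m * ((q : ℤ) * q - 2 * q - 2 * ((m : ℤ) * m) - 1) := by
      apply mul_pos (by positivity)
      linarith [hq1Z]
    linarith [hOPge, hNZ, hiden, hpos]


end Stmt16Aux

/-- for `k = 2^t` with `t ≥ 3` odd, `m = √(2k)`, and `n` the smallest integer
with `m ∣ n` and `n > 2√(k(2k+1)) + √(2k)`, the disjoint union `L` of `n/m` copies of `K_m`
is the leave of a partial `k`-star decomposition of `K_n`, yet `L ∨ K_s` has no `k`-star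
decomposition for any `s < 6k - n`. -/
theorem stmt16 (t k m n : ℕ) (ht : Odd t) (ht3 : 3 ≤ t) (hkt : k = 2 ^ t)
    (hm : m * m = 2 * k)
    (hn : m ∣ n ∧ (n : ℝ) > 2 * Real.sqrt (k * (2 * k + 1)) + Real.sqrt (2 * k))
    (hmin : ∀ n' : ℕ, n' < n →
      ¬ (m ∣ n' ∧ (n' : ℝ) > 2 * Real.sqrt (k * (2 * k + 1)) + Real.sqrt (2 * k)))
    (L : SimpleGraph (Fin n))
    (hL : ∀ x y : Fin n, L.Adj x y ↔ x ≠ y ∧ x.val / m = y.val / m) :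
    (∃ D, IsPartialStarDecompOn (⊤ : SimpleGraph (Fin n)) k D ∧
        leaveOf (⊤ : SimpleGraph (Fin n)) D = L) ∧
    ∀ s : ℕ, n + s < 6 * k → ¬ ∃ D, IsStarDecompOn (joinK L s) k D := by
  classical
  obtain ⟨hdvd, hngt⟩ := hn
  have hk8 : 8 ≤ k := by
    rw [hkt]
    calc (8:ℕ) = 2 ^ 3 := by norm_num
      _ ≤ 2 ^ t := Nat.pow_le_pow_right (by norm_num) ht3
  have hk1 : 1 ≤ k := by omega
  have hm2 : 2 ≤ m := by
    by_contra h
    push_neg at h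
    interval_cases m <;> omega
  have hm1 : 1 ≤ m := by omega
  set q : ℕ := n / m with hqdef
  have hnq : n = q * m := by
    rw [hqdef, Nat.div_mul_cancel hdvd]
  -- real square root facts
  have hmR : ((m:ℝ)) ^ 2 = 2 * (k:ℝ) := by
    rw [sq]
    exact_mod_cast hm
  have hsq1 : Real.sqrt (2 * (k:ℝ)) = m := by
    rw [show (2:ℝ) * (k:ℝ) = (m:ℝ)^2 by linarith [hmR]]
    exact Real.sqrt_sq (by positivity)
  have hsq2 : 2 * Real.sqrt ((k:ℝ) * (2 * (k:ℝ) + 1))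
      = Real.sqrt ((m:ℝ)^2 * (2 * (m:ℝ)^2 + 2)) := by
    have hiden : (m:ℝ)^2 * (2 * (m:ℝ)^2 + 2)
        = (2 * Real.sqrt ((k:ℝ) * (2 * (k:ℝ) + 1)))^2 := by
      rw [mul_pow, Real.sq_sqrt (by positivity), hmR]
      ring
    rw [hiden, Real.sqrt_sq (by positivity)]
  rw [hsq1, hsq2] at hngt
  have hY0 : (0:ℝ) ≤ Real.sqrt ((m:ℝ)^2 * (2 * (m:ℝ)^2 + 2)) := Real.sqrt_nonneg _
  have hnm : m < n := by
    have hR : (m:ℝ) < (n:ℝ) := by linarith [hngt, hY0]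
    exact_mod_cast hR
  have hq1' : 1 ≤ q := by
    rcases Nat.eq_zero_or_pos q with h | h
    · rw [h] at hnq; omega
    · exact h
  have hsub1 : (q - 1) * m = q * m - m := Nat.sub_one_mul q m
  have hsq3 : ((n - m : ℕ) : ℝ) = (n:ℝ) - m := by
    push_cast [le_of_lt hnm]
    ring
  -- lower bound: (q-1)^2 ≥ 2m^2+3
  have hqq1 : 2 * (m * m) + 3 ≤ (q - 1) * (q - 1) := by
    have h1 : Real.sqrt ((m:ℝ)^2 * (2 * (m:ℝ)^2 + 2)) < (n:ℝ) - m := by linarith [hngt]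
    have h2 : (m:ℝ)^2 * (2 * (m:ℝ)^2 + 2) < ((n:ℝ) - m)^2 :=
      (Real.sqrt_lt' (by linarith [hY0])).1 h1
    have h3 : m * m * (2 * (m * m) + 2) < (n - m) * (n - m) := by
      have h4 : ((m * m * (2 * (m * m) + 2) : ℕ) : ℝ) < (((n - m) * (n - m) : ℕ) : ℝ) := by
        push_cast
        rw [hsq3]
        nlinarith [h2]
      exact_mod_cast h4
    have h5 : n - m = (q - 1) * m := by omega
    rw [h5] at h3
    have h6 : (q - 1) * m * ((q - 1) * m) = m * m * ((q - 1) * (q - 1)) := by ring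
    rw [h6] at h3
    have h7 := Nat.lt_of_mul_lt_mul_left h3
    omega
  have hq2' : m + 2 ≤ q := by
    by_contra h
    push_neg at h
    have h8 : q - 1 ≤ m := by omega
    have h9 : (q - 1) * (q - 1) ≤ m * m := Nat.mul_le_mul h8 h8
    omega
  have hq1big : 2 * (m * m) + 2 * q + 2 ≤ q * q := by
    have h2 : ((q:ℤ) - 1) * ((q:ℤ) - 1) = ((q - 1 : ℕ) : ℤ) * ((q - 1 : ℕ) : ℤ) := by
      push_cast [hq1']
      ring
    have h3 : 2 * ((m:ℤ) * m) + 3 ≤ ((q:ℤ) - 1) * ((q:ℤ) - 1) := by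
      rw [h2]
      exact_mod_cast hqq1
    have h4 : 2 * ((m:ℤ) * m) + 2 * (q:ℤ) + 2 ≤ (q:ℤ) * q := by nlinarith [h3]
    exact_mod_cast h4
  -- upper bound from minimality: q ≤ 2m+1
  have h2m : 2 * m ≤ n := by
    have h1 : 2 * m ≤ q * m := Nat.mul_le_mul_right m (by omega)
    omega
  have hupper : (q - 2) * (q - 2) ≤ 2 * (m * m) + 2 := by
    have hub := hmin (n - m) (by omega)
    have hdvd' : m ∣ n - m := Nat.dvd_sub hdvd dvd_rfl
    have hnotgt : ¬ ((n - m : ℕ) : ℝ) > 2 * Real.sqrt ((k:ℝ) * (2 * (k:ℝ) + 1))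
        + Real.sqrt (2 * (k:ℝ)) := fun hgt => hub ⟨hdvd', hgt⟩
    rw [hsq1, hsq2] at hnotgt
    push_neg at hnotgt
    rw [hsq3] at hnotgt
    have hle : ((n - 2*m : ℕ) : ℝ) ≤ Real.sqrt ((m:ℝ)^2 * (2 * (m:ℝ)^2 + 2)) := by
      have hc : ((n - 2*m : ℕ):ℝ) = (n:ℝ) - 2*m := by
        push_cast [h2m]
        ring
      rw [hc]
      linarith [hnotgt]
    have hsq' : (((n - 2*m : ℕ)):ℝ)^2 ≤ (m:ℝ)^2 * (2 * (m:ℝ)^2 + 2) :=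
      (Real.le_sqrt (by positivity) (by positivity)).1 hle
    have hN : (n - 2*m) * (n - 2*m) ≤ m * m * (2 * (m * m) + 2) := by
      have h4 : (((n - 2*m) * (n - 2*m) : ℕ) : ℝ) ≤ ((m * m * (2 * (m * m) + 2) : ℕ) : ℝ) := by
        push_cast
        nlinarith [hsq']
      exact_mod_cast h4
    have h5 : n - 2*m = (q - 2) * m := by
      have := Nat.sub_mul q 2 m
      omega
    rw [h5] at hN
    have h6 : (q - 2) * m * ((q - 2) * m) = m * m * ((q - 2) * (q - 2)) := by ring
    rw [h6] at hN
    exact Nat.le_of_mul_le_mul_left hN (by omega)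
  have hq2m : q ≤ 2 * m + 1 := by
    by_contra h
    push_neg at h
    have h1 : 2 * m ≤ q - 2 := by omega
    have h2 : (2*m) * (2*m) ≤ (q - 2) * (q - 2) := Nat.mul_le_mul h1 h1
    have h3 : (2*m) * (2*m) = 4 * (m*m) := by ring
    have h4 : 4 ≤ m * m := Nat.mul_le_mul hm2 hm2
    omega
  -- set ρ
  set ρ : ℕ := q - 1 - m with hρdef
  have hqρ : q = m + 1 + ρ := by omega
  have hρ1 : 1 ≤ ρ := by omega
  have hρm : ρ ≤ m := by omega
  constructor
  · -- part 1: the partial decomposition with leave L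
    obtain ⟨D, hD1, hD2⟩ := Stmt16Aux.part1core m k q ρ n hm hk1 hqρ hρ1 hρm hnq
    refine ⟨D, hD1, ?_⟩
    ext x y
    simp only [leaveOf, SimpleGraph.deleteEdges_adj, SimpleGraph.top_adj, Finset.mem_coe]
    rw [hL x y]
    constructor
    · rintro ⟨hne, hnotin⟩
      refine ⟨hne, ?_⟩
      by_contra hblk
      exact hnotin ((hD2 x y).2 hblk)
    · rintro ⟨hne, hblk⟩
      exact ⟨hne, fun hin => ((hD2 x y).1 hin) hblk⟩
  · -- part 2: no decomposition of the join
    intro s hs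
    exact Stmt16Aux.part2core t k m n q hkt hm hk8 hnq hq1big L hL s hs
end
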